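/- arXiv:1610.01257 — 3 statements merged into one kernel-verified Lean document; each statement's English description precedes it below -/
import Mathlib

section
/- Let N ∈ ℕ, set ℓ := N/2, and let ν > 0. Then for all k, j ∈ {0,…,N}: 2^{−N} C(N,k) Σ_{i=0}^{N} C(N,i)(ν+N−i)(ν+i) K_i(k) K_j(i) equals −(k+1)(k+2)/4 if j = k+2; equals ℓ(ℓ−1/2) + k(k/2−ℓ) + ν(ν+N) if j = k; equals −(N−k+1)(N−k+2)/4 if j = k−2; and equals 0 otherwise. -/
open Polynomial

/-- Krawtchouk polynomial `K_n(x)` with parameter `p = 1/2` and `N` trials. -/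
noncomputable def kraw (N n : ℕ) (x : ℝ) : ℝ :=
  ∑ s ∈ Finset.range (n + 1),
    ((ascPochhammer ℝ s).eval (-(n : ℝ)) * (ascPochhammer ℝ s).eval (-x)
        / ((ascPochhammer ℝ s).eval (-(N : ℝ)) * (Nat.factorial s : ℝ))) * 2 ^ s

namespace Stmt14

open Finset
open scoped symmDiff

variable {N : ℕ}


noncomputable def ch (S T : Finset (Fin N)) : ℝ := (-1) ^ (S ∩ T).card

lemma ch_comm (S T : Finset (Fin N)) : ch S T = ch T S := by rw [ch, ch, inter_comm]

lemma card_symmDiff_add (X Y : Finset (Fin N)) :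
    (X ∆ Y).card + 2 * (X ∩ Y).card = X.card + Y.card := by
  have h2 : X ∆ Y = (X ∪ Y) \ (X ∩ Y) := by
    rw [symmDiff_eq_sup_sdiff_inf]; rfl
  have h3 := Finset.card_inter_add_card_union X Y
  have h4 : (X ∩ Y) ⊆ X ∪ Y := (inter_subset_left).trans subset_union_left
  have h5 := Finset.card_sdiff_of_subset h4
  have h6 : #(X ∩ Y) ≤ #(X ∪ Y) := Finset.card_le_card h4
  rw [h2, h5]
  omega

lemma neg_one_pow_card_symmDiff (X Y : Finset (Fin N)) :
    ((-1 : ℝ)) ^ (X ∆ Y).card = (-1) ^ (X.card + Y.card) := by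
  calc ((-1 : ℝ)) ^ (X ∆ Y).card
      = ((-1 : ℝ)) ^ ((X ∆ Y).card + 2 * (X ∩ Y).card) := by
        rw [pow_add, pow_mul, neg_one_sq, one_pow, mul_one]
    _ = _ := by rw [card_symmDiff_add]

lemma ch_mul (S T U : Finset (Fin N)) : ch S T * ch S U = ch S (T ∆ U) := by
  have h1 : S ∩ (T ∆ U) = (S ∩ T) ∆ (S ∩ U) := by
    have := inf_symmDiff_distrib_left (a := S) (b := T) (c := U)
    simpa using this
  rw [ch, ch, ch, h1, neg_one_pow_card_symmDiff, pow_add]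

lemma sum_ch (T : Finset (Fin N)) :
    ∑ S : Finset (Fin N), ch S T = if T = ∅ then (2 : ℝ) ^ N else 0 := by
  split_ifs with h
  · subst h
    simp only [ch, inter_empty, card_empty, pow_zero, Finset.sum_const, Finset.card_univ,
      Fintype.card_finset, Fintype.card_fin, nsmul_eq_mul, mul_one, Nat.cast_pow,
      Nat.cast_ofNat]
  · obtain ⟨t, ht⟩ := Finset.nonempty_iff_ne_empty.2 h
    refine Finset.sum_ninvolution (fun S => S ∆ {t}) ?_ ?_ (fun S => mem_univ _) ?_
    · intro S
      have h1 : ch (S ∆ {t}) T = ch T S * ch T {t} := by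
        rw [ch_comm, ch_mul]
      rw [h1, ch_comm S T]
      have h2 : ch T {t} = -1 := by
        rw [ch, Finset.inter_singleton_of_mem ht]
        simp
      rw [h2]; ring
    · intro S _
      intro hST
      have h3 : S ∆ (S ∆ {t}) = ({t} : Finset (Fin N)) := symmDiff_symmDiff_cancel_left S {t}
      rw [hST, symmDiff_self] at h3
      simp only [Finset.bot_eq_empty] at h3
      exact (Finset.singleton_ne_empty t) h3.symm
    · intro S
      exact symmDiff_symmDiff_cancel_right {t} S

lemma countD (V W : Finset (Fin N)) (hWV : W ⊆ V) {n : ℕ} (hW : W.card ≤ n) :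
    ((Finset.powersetCard n (univ : Finset (Fin N))).filter (fun A => A ∩ V = W)).card
      = (N - V.card).choose (n - W.card) := by
  have hc : (Vᶜ : Finset (Fin N)).card = N - V.card := by
    rw [Finset.card_compl, Fintype.card_fin]
  rw [← hc, ← Finset.card_powersetCard (n - W.card) (Vᶜ : Finset (Fin N))]
  refine Finset.card_nbij' (fun A => A \ V) (fun B => B ∪ W) ?_ ?_ ?_ ?_
  · intro A hA
    simp only [Finset.mem_coe, Finset.mem_filter, Finset.mem_powersetCard] at hA
    obtain ⟨⟨-, hcard⟩, hAV⟩ := hA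
    rw [Finset.mem_coe, Finset.mem_powersetCard]
    constructor
    · intro x hx
      rw [Finset.mem_sdiff] at hx
      exact Finset.mem_compl.2 hx.2
    · show #(A \ V) = n - #W
      have h7 : A \ V = A \ (A ∩ V) := by rw [Finset.sdiff_inter_self_left]
      rw [h7, Finset.card_sdiff_of_subset (Finset.inter_subset_left), hAV, hcard]
  · intro B hB
    rw [Finset.mem_coe, Finset.mem_powersetCard] at hB
    obtain ⟨hBV, hBcard⟩ := hB
    have hdisj : Disjoint B V := by
      rw [Finset.disjoint_right]
      intro x hxV hxB
      exact (Finset.mem_compl.1 (hBV hxB)) hxV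
    have hdisjW : Disjoint B W := hdisj.mono_right hWV
    simp only [Finset.mem_coe, Finset.mem_filter, Finset.mem_powersetCard]
    refine ⟨⟨Finset.subset_univ _, ?_⟩, ?_⟩
    · rw [Finset.card_union_of_disjoint hdisjW, hBcard]
      omega
    · rw [Finset.union_inter_distrib_right, Finset.inter_eq_left.2 hWV,
        (Finset.disjoint_iff_inter_eq_empty.1 hdisj), Finset.empty_union]
  · intro A hA
    simp only [Finset.mem_coe, Finset.mem_filter, Finset.mem_powersetCard] at hA
    obtain ⟨-, hAV⟩ := hA
    show A \ V ∪ W = A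
    rw [← hAV, Finset.sdiff_union_inter]
  · intro B hB
    rw [Finset.mem_coe, Finset.mem_powersetCard] at hB
    obtain ⟨hBV, -⟩ := hB
    have hdisj : Disjoint B V := by
      rw [Finset.disjoint_right]
      intro x hxV hxB
      exact (Finset.mem_compl.1 (hBV hxB)) hxV
    show (B ∪ W) \ V = B
    rw [Finset.union_sdiff_distrib, Finset.sdiff_eq_self_of_disjoint hdisj,
      Finset.sdiff_eq_empty_iff_subset.2 hWV, Finset.union_empty]

lemma countD0 (V W : Finset (Fin N)) {n : ℕ} (hW : n < W.card) :
    ((Finset.powersetCard n (univ : Finset (Fin N))).filter (fun A => A ∩ V = W)).card = 0 := by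
  rw [Finset.card_eq_zero, Finset.filter_eq_empty_iff]
  intro A hA
  rw [Finset.mem_powersetCard] at hA
  intro hAV
  have : W.card ≤ A.card := by
    rw [← hAV]; exact Finset.card_le_card Finset.inter_subset_left
  omega

noncomputable def Fk (N : ℕ) (i : ℕ) (S : Finset (Fin N)) : ℝ :=
  ∑ T ∈ Finset.powersetCard i (univ : Finset (Fin N)), ch S T

lemma neg_one_pow_eq_sum_powerset (B : Finset (Fin N)) :
    ((-1 : ℝ)) ^ B.card = ∑ A ∈ B.powerset, (-2 : ℝ) ^ A.card := by
  rw [Finset.sum_powerset_apply_card (fun m => (-2 : ℝ) ^ m)]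
  have h := add_pow (-2 : ℝ) 1 B.card
  simp only [one_pow, mul_one] at h
  have h2 : (-2 : ℝ) + 1 = -1 := by norm_num
  rw [h2] at h
  rw [h]
  refine Finset.sum_congr rfl fun m _ => ?_
  rw [nsmul_eq_mul]
  ring

lemma F_closed (i : ℕ) (S : Finset (Fin N)) :
    Fk N i S = ∑ s ∈ Finset.range (N + 1),
      (S.card.choose s : ℝ) * ((-2 : ℝ) ^ s *
        (if s ≤ i then (((N - s).choose (i - s) : ℕ) : ℝ) else 0)) := by
  have step1 : Fk N i S = ∑ T ∈ Finset.powersetCard i (univ : Finset (Fin N)),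
      ∑ A ∈ S.powerset, (if A ⊆ T then (-2 : ℝ) ^ A.card else 0) := by
    refine Finset.sum_congr rfl fun T _ => ?_
    rw [ch, neg_one_pow_eq_sum_powerset (S ∩ T)]
    rw [← Finset.sum_filter]
    refine (Finset.sum_congr ?_ fun _ _ => rfl)
    ext A
    rw [Finset.mem_powerset, Finset.mem_filter, Finset.mem_powerset, Finset.subset_inter_iff,
      and_comm]
  rw [step1, Finset.sum_comm]
  have step2 : ∀ A ∈ S.powerset,
      (∑ T ∈ Finset.powersetCard i (univ : Finset (Fin N)),
        (if A ⊆ T then (-2 : ℝ) ^ A.card else 0))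
      = (-2 : ℝ) ^ A.card *
          (if A.card ≤ i then (((N - A.card).choose (i - A.card) : ℕ) : ℝ) else 0) := by
    intro A _
    rw [← Finset.sum_filter, Finset.sum_const]
    have hfil : (Finset.powersetCard i (univ : Finset (Fin N))).filter (fun T => A ⊆ T)
        = (Finset.powersetCard i (univ : Finset (Fin N))).filter (fun T => T ∩ A = A) := by
      refine Finset.filter_congr fun T _ => ?_
      rw [Finset.inter_eq_right]
    rw [hfil]
    by_cases hAi : A.card ≤ i
    · rw [countD A A subset_rfl hAi, if_pos hAi, nsmul_eq_mul, mul_comm]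
    · rw [countD0 A A (by omega), if_neg hAi]
      simp
  rw [Finset.sum_congr rfl step2]
  rw [Finset.sum_powerset_apply_card
    (fun m => (-2 : ℝ) ^ m * (if m ≤ i then (((N - m).choose (i - m) : ℕ) : ℝ) else 0))]
  have hcard : S.card ≤ N := by
    have := Finset.card_le_card (Finset.subset_univ S)
    simpa [Finset.card_univ] using this
  rw [Finset.sum_subset (show Finset.range (S.card + 1) ⊆ Finset.range (N + 1) from
    Finset.range_subset_range.mpr (by omega))]
  · refine Finset.sum_congr rfl fun s _ => ?_
    rw [nsmul_eq_mul]
  · intro s _ hs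
    rw [Finset.mem_range, not_lt] at hs
    rw [Nat.choose_eq_zero_of_lt (by rw [Finset.mem_range] at *; omega)]
    simp

lemma F_card_eq {i : ℕ} {S S' : Finset (Fin N)} (h : S.card = S'.card) :
    Fk N i S = Fk N i S' := by rw [F_closed, F_closed, h]

lemma kraw_eq_sum (i : ℕ) (hi : i ≤ N) (x : ℕ) :
    (N.choose i : ℝ) * kraw N i (x : ℝ)
      = ∑ s ∈ Finset.range (N + 1),
          (x.choose s : ℝ) * ((-2 : ℝ) ^ s *
            (if s ≤ i then (((N - s).choose (i - s) : ℕ) : ℝ) else 0)) := by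
  rw [kraw, Finset.mul_sum]
  rw [← Finset.sum_subset (show Finset.range (i + 1) ⊆ Finset.range (N + 1) from
    Finset.range_subset_range.mpr (by omega))]
  · refine Finset.sum_congr rfl fun s hs => ?_
    rw [Finset.mem_range] at hs
    have hsi : s ≤ i := by omega
    have hsN : s ≤ N := hsi.trans hi
    rw [if_pos hsi]
    have hCN : ((N.choose s : ℕ) : ℝ) ≠ 0 :=
      Nat.cast_ne_zero.mpr (Nat.choose_pos hsN).ne'
    have hfac : ((s.factorial : ℕ) : ℝ) ≠ 0 :=
      Nat.cast_ne_zero.mpr (Nat.factorial_ne_zero s)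
    have key : ((N.choose i : ℕ) : ℝ) * ((i.choose s : ℕ) : ℝ)
        = ((N.choose s : ℕ) : ℝ) * (((N - s).choose (i - s) : ℕ) : ℝ) := by
      exact_mod_cast congrArg (Nat.cast (R := ℝ)) (Nat.choose_mul (n := N) hsi)
    rw [ascPochhammer_eval_neg_eq_descPochhammer, ascPochhammer_eval_neg_eq_descPochhammer,
      ascPochhammer_eval_neg_eq_descPochhammer, descPochhammer_eval_eq_descFactorial,
      descPochhammer_eval_eq_descFactorial, descPochhammer_eval_eq_descFactorial]
    push_cast [Nat.descFactorial_eq_factorial_mul_choose]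
    have h2 : (-2 : ℝ) ^ s = (-1 : ℝ) ^ s * 2 ^ s := by
      rw [show (-2 : ℝ) = (-1) * 2 by norm_num, mul_pow]
    rw [h2]
    rcases Nat.even_or_odd s with he | ho
    · rw [he.neg_one_pow]
      field_simp
      linear_combination ((x.choose s : ℕ) : ℝ) * key
    · rw [ho.neg_one_pow]
      field_simp
      linear_combination (-((x.choose s : ℕ) : ℝ)) * key
  · intro s hsN hs
    rw [Finset.mem_range, not_lt] at hs
    rw [if_neg (by omega)]
    simp

lemma choose_mul_kraw (i : ℕ) (hi : i ≤ N) (S : Finset (Fin N)) :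
    (N.choose i : ℝ) * kraw N i (S.card : ℝ) = Fk N i S := by
  rw [kraw_eq_sum i hi, F_closed]

lemma recip (k i : ℕ) (S0 : Finset (Fin N)) (hS0 : S0.card = k) :
    (N.choose k : ℝ) * Fk N i S0
      = ∑ T ∈ Finset.powersetCard i (univ : Finset (Fin N)), Fk N k T := by
  have h1 : ∑ S ∈ Finset.powersetCard k (univ : Finset (Fin N)), Fk N i S
      = (N.choose k : ℝ) * Fk N i S0 := by
    have e1 : ∀ S ∈ Finset.powersetCard k (univ : Finset (Fin N)), Fk N i S = Fk N i S0 :=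
      fun S hS => F_card_eq ((Finset.mem_powersetCard.1 hS).2.trans hS0.symm)
    rw [Finset.sum_congr rfl e1, Finset.sum_const, Finset.card_powersetCard, Finset.card_univ,
      Fintype.card_fin, nsmul_eq_mul]
  rw [← h1]
  unfold Fk
  rw [Finset.sum_comm]
  exact Finset.sum_congr rfl fun T _ => Finset.sum_congr rfl fun S _ => ch_comm S T

lemma sum_group_card (φ : Finset (Fin N) → ℝ) :
    ∑ i ∈ Finset.range (N + 1), ∑ T ∈ Finset.powersetCard i (univ : Finset (Fin N)), φ T
      = ∑ T : Finset (Fin N), φ T := by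
  have h : ∀ T ∈ (univ : Finset (Finset (Fin N))), T.card ∈ Finset.range (N + 1) := by
    intro T _
    rw [Finset.mem_range, Nat.lt_succ_iff]
    have := Finset.card_le_card (Finset.subset_univ T)
    simpa [Finset.card_univ] using this
  have h2 := Finset.sum_fiberwise_of_maps_to h φ
  rw [← h2]
  refine Finset.sum_congr rfl fun i _ => Finset.sum_congr ?_ fun _ _ => rfl
  rw [Finset.powersetCard_eq_filter, Finset.powerset_univ]

lemma dsum_eq (T : Finset (Fin N)) :
    ∑ e : Fin N, ch T {e} = (N : ℝ) - 2 * T.card := by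
  have h1 : ∀ e : Fin N, ch T {e} = if e ∈ T then (-1 : ℝ) else 1 := by
    intro e
    by_cases he : e ∈ T
    · rw [ch, Finset.inter_singleton_of_mem he, if_pos he]; simp
    · rw [ch, Finset.inter_singleton_of_notMem he, if_neg he]; simp
  rw [Finset.sum_congr rfl fun e _ => h1 e, Finset.sum_ite, Finset.sum_const,
    Finset.sum_const]
  have h2 : (univ : Finset (Fin N)).filter (fun e => e ∈ T) = T := by
    ext e; simp
  have h3 : (univ : Finset (Fin N)).filter (fun e => ¬ e ∈ T) = Tᶜ := by
    ext e; simp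
  rw [h2, h3, Finset.card_compl, Fintype.card_fin, nsmul_eq_mul, nsmul_eq_mul]
  have hT : T.card ≤ N := by
    have := Finset.card_le_card (Finset.subset_univ T)
    simpa [Finset.card_univ] using this
  rw [Nat.cast_sub hT]
  ring

def pcnt (N k j : ℕ) : ℕ :=
  if j = k + 2 then (N - 2).choose k
  else if j = k then (if 1 ≤ k then 2 * ((N - 2).choose (k - 1)) else 0)
  else if j + 2 = k then (N - 2).choose (k - 2) else 0

lemma count_pairs (k j : ℕ) {e f : Fin N} (hef : e ≠ f) :
    ((Finset.powersetCard k (univ : Finset (Fin N))).filter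
        (fun A => A ∆ ({e} ∆ {f}) ∈ Finset.powersetCard j (univ : Finset (Fin N)))).card
      = pcnt N k j := by
  have hV : ({e} ∆ {f} : Finset (Fin N)) = {e, f} := by
    rw [Disjoint.symmDiff_eq_sup (by rwa [Finset.disjoint_singleton])]
    rw [sup_eq_union]
    exact (Finset.insert_eq e {f}).symm
  have hVcard : ({e, f} : Finset (Fin N)).card = 2 := Finset.card_pair hef
  rw [hV]
  have hcond : (Finset.powersetCard k (univ : Finset (Fin N))).filter
        (fun A => A ∆ ({e, f} : Finset (Fin N)) ∈ Finset.powersetCard j univ)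
      = (Finset.powersetCard k (univ : Finset (Fin N))).filter
        (fun A => j + 2 * (A ∩ ({e, f} : Finset (Fin N))).card = k + 2) := by
    refine Finset.filter_congr fun A hA => ?_
    rw [Finset.mem_powersetCard] at hA
    have hs := card_symmDiff_add A {e, f}
    rw [hA.2, hVcard] at hs
    rw [Finset.mem_powersetCard]
    constructor
    · rintro ⟨-, hc⟩; omega
    · intro hc; exact ⟨Finset.subset_univ _, by omega⟩
  rw [hcond, pcnt]
  by_cases h1 : j = k + 2
  · rw [if_pos h1]
    have hiff : ∀ A ∈ Finset.powersetCard k (univ : Finset (Fin N)),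
        (j + 2 * (A ∩ ({e, f} : Finset (Fin N))).card = k + 2
          ↔ A ∩ ({e, f} : Finset (Fin N)) = ∅) := by
      intro A _
      rw [← Finset.card_eq_zero]
      omega
    rw [Finset.filter_congr hiff, countD {e, f} ∅ (Finset.empty_subset _) (Nat.zero_le k),
      hVcard, Finset.card_empty, Nat.sub_zero]
  · rw [if_neg h1]
    by_cases h2 : j = k
    · rw [if_pos h2]
      by_cases h3 : 1 ≤ k
      · rw [if_pos h3]
        have hsplit : (Finset.powersetCard k (univ : Finset (Fin N))).filter
              (fun A => j + 2 * (A ∩ ({e, f} : Finset (Fin N))).card = k + 2)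
            = (Finset.powersetCard k (univ : Finset (Fin N))).filter
                (fun A => A ∩ ({e, f} : Finset (Fin N)) = {e})
              ∪ (Finset.powersetCard k (univ : Finset (Fin N))).filter
                (fun A => A ∩ ({e, f} : Finset (Fin N)) = {f}) := by
          ext A
          simp only [Finset.mem_union, Finset.mem_filter]
          constructor
          · rintro ⟨hA, hc⟩
            have ht : (A ∩ ({e, f} : Finset (Fin N))).card = 1 := by omega
            obtain ⟨a, ha⟩ := Finset.card_eq_one.1 ht
            have haV : a ∈ ({e, f} : Finset (Fin N)) := by
              have h5 : a ∈ A ∩ ({e, f} : Finset (Fin N)) := ha ▸ Finset.mem_singleton_self a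
              exact Finset.mem_of_mem_inter_right h5
            rw [Finset.mem_insert, Finset.mem_singleton] at haV
            rcases haV with h6 | h6
            · exact Or.inl ⟨hA, by rw [ha, h6]⟩
            · exact Or.inr ⟨hA, by rw [ha, h6]⟩
          · rintro (⟨hA, h6⟩ | ⟨hA, h6⟩) <;> refine ⟨hA, ?_⟩ <;>
              rw [h6, Finset.card_singleton] <;> omega
        rw [hsplit, Finset.card_union_of_disjoint]
        · rw [countD {e, f} {e} (by simp) (by rw [Finset.card_singleton]; omega),
            countD {e, f} {f} (by simp) (by rw [Finset.card_singleton]; omega), hVcard]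
          simp only [Finset.card_singleton]
          omega
        · rw [Finset.disjoint_left]
          rintro A hA hA'
          rw [Finset.mem_filter] at hA hA'
          have h7 : ({e} : Finset (Fin N)) = {f} := hA.2.symm.trans hA'.2
          exact hef (Finset.singleton_injective h7)
      · rw [if_neg h3]
        rw [Finset.card_eq_zero, Finset.filter_eq_empty_iff]
        intro A hA hc
        rw [Finset.mem_powersetCard] at hA
        have hle := Finset.card_le_card
          (show A ∩ ({e, f} : Finset (Fin N)) ⊆ A from Finset.inter_subset_left)
        rw [hA.2] at hle
        omega
    · rw [if_neg h2]
      by_cases h4 : j + 2 = k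
      · rw [if_pos h4]
        have hiff : ∀ A ∈ Finset.powersetCard k (univ : Finset (Fin N)),
            (j + 2 * (A ∩ ({e, f} : Finset (Fin N))).card = k + 2
              ↔ A ∩ ({e, f} : Finset (Fin N)) = {e, f}) := by
          intro A _
          constructor
          · intro hc
            apply Finset.eq_of_subset_of_card_le Finset.inter_subset_right
            rw [hVcard]
            omega
          · intro h5
            rw [h5, hVcard]
            omega
        rw [Finset.filter_congr hiff, countD {e, f} {e, f} subset_rfl (by omega), hVcard]
      · rw [if_neg h4, Finset.card_eq_zero, Finset.filter_eq_empty_iff]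
        intro A hA hc
        have hle := Finset.card_le_card
          (show A ∩ ({e, f} : Finset (Fin N)) ⊆ {e, f} from Finset.inter_subset_right)
        rw [hVcard] at hle
        omega

lemma count_diag (k j : ℕ) (e : Fin N) :
    ((Finset.powersetCard k (univ : Finset (Fin N))).filter
        (fun A => A ∆ ({e} ∆ {e}) ∈ Finset.powersetCard j (univ : Finset (Fin N)))).card
      = if j = k then N.choose k else 0 := by
  have h1 : ∀ A : Finset (Fin N), A ∆ (({e} : Finset (Fin N)) ∆ {e}) = A := fun A => by
    rw [symmDiff_self, symmDiff_bot]
  by_cases hjk : j = k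
  · rw [if_pos hjk]
    rw [Finset.filter_true_of_mem (fun A hA => by rw [h1]; rwa [hjk])]
    rw [Finset.card_powersetCard, Finset.card_univ, Fintype.card_fin]
  · rw [if_neg hjk, Finset.card_eq_zero, Finset.filter_eq_empty_iff]
    intro A hA hmem
    rw [h1] at hmem
    rw [Finset.mem_powersetCard] at hA hmem
    exact hjk (hmem.2.symm.trans hA.2)

lemma symmDiff_cond_iff (A B V : Finset (Fin N)) :
    (V ∆ (A ∆ B) = ∅) ↔ (B = A ∆ V) := by
  rw [← Finset.bot_eq_empty, symmDiff_eq_bot]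
  constructor
  · intro h
    rw [h, symmDiff_symmDiff_cancel_left]
  · intro h
    rw [h, symmDiff_symmDiff_cancel_left]

lemma G0_eq (k j : ℕ) :
    ∑ T : Finset (Fin N), Fk N k T * Fk N j T
      = if j = k then (2 : ℝ) ^ N * (N.choose k : ℝ) else 0 := by
  have step1 : ∀ T : Finset (Fin N), Fk N k T * Fk N j T
      = ∑ A ∈ Finset.powersetCard k (univ : Finset (Fin N)),
          ∑ B ∈ Finset.powersetCard j (univ : Finset (Fin N)), ch T (A ∆ B) := by
    intro T
    rw [Fk, Fk, Finset.sum_mul_sum]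
    exact Finset.sum_congr rfl fun A _ => Finset.sum_congr rfl fun B _ => ch_mul T A B
  rw [Finset.sum_congr rfl fun T _ => step1 T]
  rw [Finset.sum_comm]
  rw [Finset.sum_congr rfl fun A _ => Finset.sum_comm]
  have h1 : ∀ A B : Finset (Fin N), (∑ T : Finset (Fin N), ch T (A ∆ B))
      = if B = A then (2:ℝ)^N else 0 := by
    intro A B
    rw [sum_ch]
    refine if_congr ?_ rfl rfl
    rw [← Finset.bot_eq_empty, symmDiff_eq_bot, eq_comm]
  have step2 : ∀ A ∈ Finset.powersetCard k (univ : Finset (Fin N)),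
      (∑ B ∈ Finset.powersetCard j (univ : Finset (Fin N)),
        ∑ T : Finset (Fin N), ch T (A ∆ B))
      = if A ∈ Finset.powersetCard j (univ : Finset (Fin N)) then (2:ℝ)^N else 0 := by
    intro A _
    rw [Finset.sum_congr rfl fun B _ => h1 A B,
      Finset.sum_ite_eq' (Finset.powersetCard j (univ : Finset (Fin N))) A
        (fun _ => (2:ℝ)^N)]
  rw [Finset.sum_congr rfl step2]
  by_cases hjk : j = k
  · subst hjk
    rw [if_pos rfl, Finset.sum_ite_of_true (fun A hA => hA), Finset.sum_const,
      Finset.card_powersetCard, Finset.card_univ, Fintype.card_fin, nsmul_eq_mul, mul_comm]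
  · rw [if_neg hjk]
    refine Finset.sum_eq_zero fun A hA => ?_
    rw [if_neg]
    intro hmem
    rw [Finset.mem_powersetCard] at hA hmem
    exact hjk (hmem.2.symm.trans hA.2)

lemma WQ_eq (k j : ℕ) :
    ∑ T : Finset (Fin N),
        (∑ e : Fin N, ch T {e}) * (∑ f : Fin N, ch T {f}) * Fk N k T * Fk N j T
      = (2:ℝ)^N * ((N:ℝ) * (if j = k then (N.choose k : ℝ) else 0)
          + (N:ℝ) * ((N - 1 : ℕ) : ℝ) * (pcnt N k j : ℝ)) := by
  have step1 : ∀ T : Finset (Fin N),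
      (∑ e : Fin N, ch T {e}) * (∑ f : Fin N, ch T {f}) * Fk N k T * Fk N j T
      = ∑ e : Fin N, ∑ A ∈ Finset.powersetCard k (univ : Finset (Fin N)),
          ∑ f : Fin N, ∑ B ∈ Finset.powersetCard j (univ : Finset (Fin N)),
            ch T (({e} ∆ {f}) ∆ (A ∆ B)) := by
    intro T
    rw [mul_assoc ((∑ e : Fin N, ch T {e}) * (∑ f : Fin N, ch T {f}))]
    have e1 : (∑ e : Fin N, ch T {e}) * (∑ f : Fin N, ch T {f})
        = ∑ e : Fin N, ∑ f : Fin N, ch T ({e} ∆ {f}) := by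
      rw [Finset.sum_mul_sum]
      exact Finset.sum_congr rfl fun e _ => Finset.sum_congr rfl fun f _ => ch_mul T {e} {f}
    have e2 : Fk N k T * Fk N j T
        = ∑ A ∈ Finset.powersetCard k (univ : Finset (Fin N)),
            ∑ B ∈ Finset.powersetCard j (univ : Finset (Fin N)), ch T (A ∆ B) := by
      rw [Fk, Fk, Finset.sum_mul_sum]
      exact Finset.sum_congr rfl fun A _ => Finset.sum_congr rfl fun B _ => ch_mul T A B
    rw [e1, e2, Finset.sum_mul_sum]
    refine Finset.sum_congr rfl fun e _ => Finset.sum_congr rfl fun A _ => ?_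
    rw [Finset.sum_mul_sum]
    exact Finset.sum_congr rfl fun f _ => Finset.sum_congr rfl fun B _ => ch_mul T _ _
  rw [Finset.sum_congr rfl fun T _ => step1 T]
  rw [Finset.sum_comm]
  rw [Finset.sum_congr rfl fun e _ => Finset.sum_comm]
  rw [Finset.sum_congr rfl fun e _ => Finset.sum_congr rfl fun A _ => Finset.sum_comm]
  rw [Finset.sum_congr rfl fun e _ => Finset.sum_congr rfl fun A _ =>
    Finset.sum_congr rfl fun f _ => Finset.sum_comm]
  -- now : ∑ e, ∑ A, ∑ f, ∑ B, ∑ T, ch T (...)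
  have h2 : ∀ (e f : Fin N) (A : Finset (Fin N)),
      (∑ B ∈ Finset.powersetCard j (univ : Finset (Fin N)),
        ∑ T : Finset (Fin N), ch T (({e} ∆ {f}) ∆ (A ∆ B)))
      = if A ∆ ({e} ∆ {f}) ∈ Finset.powersetCard j (univ : Finset (Fin N))
          then (2:ℝ)^N else 0 := by
    intro e f A
    have h3 : ∀ B : Finset (Fin N), (∑ T : Finset (Fin N), ch T (({e} ∆ {f}) ∆ (A ∆ B)))
        = if B = A ∆ ({e} ∆ {f}) then (2:ℝ)^N else 0 := by
      intro B
      rw [sum_ch]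
      exact if_congr (symmDiff_cond_iff A B ({e} ∆ {f})) rfl rfl
    rw [Finset.sum_congr rfl fun B _ => h3 B,
      Finset.sum_ite_eq' (Finset.powersetCard j (univ : Finset (Fin N)))
        (A ∆ ({e} ∆ {f})) (fun _ => (2:ℝ)^N)]
  rw [Finset.sum_congr rfl fun e _ => Finset.sum_congr rfl fun A _ =>
    Finset.sum_congr rfl fun f _ => h2 e f A]
  rw [Finset.sum_congr rfl fun e _ => Finset.sum_comm]
  -- now : ∑ e, ∑ f, ∑ A ∈ Pck, ite (A ∆ ({e}∆{f}) ∈ Pcj) 2^N 0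
  have h4 : ∀ e f : Fin N,
      (∑ A ∈ Finset.powersetCard k (univ : Finset (Fin N)),
        if A ∆ ({e} ∆ {f}) ∈ Finset.powersetCard j (univ : Finset (Fin N))
          then (2:ℝ)^N else 0)
      = (((Finset.powersetCard k (univ : Finset (Fin N))).filter
          (fun A => A ∆ ({e} ∆ {f}) ∈ Finset.powersetCard j (univ : Finset (Fin N)))).card : ℝ)
          * (2:ℝ)^N := by
    intro e f
    rw [Finset.sum_ite, Finset.sum_const, Finset.sum_const_zero, add_zero, nsmul_eq_mul]
  rw [Finset.sum_congr rfl fun e _ => Finset.sum_congr rfl fun f _ => h4 e f]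
  have h5 : ∀ e : Fin N,
      (∑ f : Fin N,
        (((Finset.powersetCard k (univ : Finset (Fin N))).filter
          (fun A => A ∆ ({e} ∆ {f}) ∈ Finset.powersetCard j (univ : Finset (Fin N)))).card : ℝ)
          * (2:ℝ)^N)
      = (if j = k then (N.choose k : ℝ) else 0) * (2:ℝ)^N
        + ((N - 1 : ℕ) : ℝ) * ((pcnt N k j : ℝ) * (2:ℝ)^N) := by
    intro e
    rw [← Finset.add_sum_erase (univ : Finset (Fin N)) _ (Finset.mem_univ e)]
    congr 1
    · rw [count_diag k j e]
      push_cast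
      rfl
    · rw [Finset.sum_congr rfl (fun f hf => by
        rw [count_pairs k j (Ne.symm (Finset.mem_erase.1 hf).1)])]
      rw [Finset.sum_const, Finset.card_erase_of_mem (Finset.mem_univ e), Finset.card_univ,
        Fintype.card_fin, nsmul_eq_mul]
  rw [Finset.sum_congr rfl fun e _ => h5 e, Finset.sum_const, Finset.card_univ,
    Fintype.card_fin, nsmul_eq_mul]
  push_cast
  ring

lemma nat_id1 {N k : ℕ} (h : k + 2 ≤ N) :
    N * (N - 1) * ((N - 2).choose k) = (k + 1) * (k + 2) * (N.choose (k + 2)) := by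
  obtain ⟨M, rfl⟩ : ∃ M, N = M + 2 := ⟨N - 2, by omega⟩
  have h1 : (M + 1) * M.choose k = (M + 1).choose (k + 1) * (k + 1) := by
    simpa using Nat.add_one_mul_choose_eq M k
  have h2 : (M + 2) * (M + 1).choose (k + 1) = (M + 2).choose (k + 2) * (k + 2) := by
    simpa using Nat.add_one_mul_choose_eq (M + 1) (k + 1)
  have e1 : M + 2 - 1 = M + 1 := by omega
  have e2 : M + 2 - 2 = M := by omega
  rw [e1, e2]
  calc (M + 2) * (M + 1) * M.choose k = (M + 2) * ((M + 1) * M.choose k) := by ring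
    _ = (M + 2) * ((M + 1).choose (k + 1) * (k + 1)) := by rw [h1]
    _ = ((M + 2) * (M + 1).choose (k + 1)) * (k + 1) := by ring
    _ = ((M + 2).choose (k + 2) * (k + 2)) * (k + 1) := by rw [h2]
    _ = (k + 1) * (k + 2) * (M + 2).choose (k + 2) := by ring

lemma nat_id2 {N k : ℕ} (h1 : 1 ≤ k) (h2 : k ≤ N) :
    N * (N - 1) * ((N - 2).choose (k - 1)) = k * (N - k) * (N.choose k) := by
  by_cases hkN : k = N
  · subst hkN
    rcases Nat.lt_or_ge k 2 with hN | hN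
    · have hk1 : k = 1 := by omega
      subst hk1
      norm_num
    · rw [Nat.choose_eq_zero_of_lt (show k - 2 < k - 1 by omega), Nat.sub_self]
      ring
  · have hkN' : k < N := by omega
    obtain ⟨M, rfl⟩ : ∃ M, N = M + 2 := ⟨N - 2, by omega⟩
    obtain ⟨t, rfl⟩ : ∃ t, k = t + 1 := ⟨k - 1, by omega⟩
    have e1 : M + 2 - 1 = M + 1 := by omega
    have e2 : M + 2 - 2 = M := by omega
    have e3 : t + 1 - 1 = t := by omega
    rw [e1, e2, e3]
    have h3 : (M + 1) * M.choose t = (M + 1).choose (t + 1) * (t + 1) := by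
      simpa using Nat.add_one_mul_choose_eq M t
    have h4 : (M + 1).choose (t + 1) * (M + 2) = (M + 2).choose (t + 1) * (M + 2 - (t + 1)) :=
      Nat.choose_mul_succ_eq (M + 1) (t + 1)
    calc (M + 2) * (M + 1) * M.choose t = (M + 2) * ((M + 1) * M.choose t) := by ring
      _ = (M + 2) * ((M + 1).choose (t + 1) * (t + 1)) := by rw [h3]
      _ = ((M + 1).choose (t + 1) * (M + 2)) * (t + 1) := by ring
      _ = ((M + 2).choose (t + 1) * (M + 2 - (t + 1))) * (t + 1) := by rw [h4]
      _ = (t + 1) * (M + 2 - (t + 1)) * (M + 2).choose (t + 1) := by ring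

lemma nat_id3 {N k j : ℕ} (h4 : j + 2 = k) (hk : k ≤ N) :
    N * (N - 1) * ((N - 2).choose (k - 2)) = (N - k + 1) * (N - k + 2) * (N.choose (k - 2)) := by
  have h := nat_id1 (N := N) (k := N - k) (by omega)
  have e2 : (N - 2).choose (N - k) = (N - 2).choose (k - 2) := by
    have h5 := Nat.choose_symm (n := N - 2) (show k - 2 ≤ N - 2 by omega)
    rwa [show N - 2 - (k - 2) = N - k by omega] at h5
  have e3 : N.choose (N - k + 2) = N.choose (k - 2) := by
    have h5 := Nat.choose_symm (n := N) (show k - 2 ≤ N by omega)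
    rwa [show N - (k - 2) = N - k + 2 by omega] at h5
  rw [← e2, ← e3]
  exact h


end Stmt14

open Stmt14 in
/-- the entries of the constant matrix
`Δ_{k,j} = 2^{−N} C(N,k) Σ_i C(N,i)(ν+N−i)(ν+i) K_i(k) K_j(i)` (up to the factor
`ν(ν+N)`) are pentadiagonal, given explicitly by the stated case distinction. -/
theorem stmt14 (N : ℕ) (ℓ : ℝ) (hℓ : ℓ = (N : ℝ) / 2) (ν : ℝ) (hν : 0 < ν) :
    ∀ k j : ℕ, k ≤ N → j ≤ N →
      ((2 : ℝ) ^ N)⁻¹ * (N.choose k : ℝ) *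
        (∑ i ∈ Finset.range (N + 1),
          (N.choose i : ℝ) * ((ν + (N : ℝ) - (i : ℝ)) * (ν + (i : ℝ)))
            * kraw N i (k : ℝ) * kraw N j (i : ℝ))
      = if j = k + 2 then -((k : ℝ) + 1) * ((k : ℝ) + 2) / 4
        else if j = k then ℓ * (ℓ - 1/2) + (k : ℝ) * ((k : ℝ)/2 - ℓ) + ν * (ν + (N : ℝ))
        else if j + 2 = k then -((N : ℝ) - (k : ℝ) + 1) * ((N : ℝ) - (k : ℝ) + 2) / 4
        else 0 := by
  subst hℓ
  intro k j hk hj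
  classical
  obtain ⟨S0, -, hS0⟩ := Finset.exists_subset_card_eq
    (show k ≤ (Finset.univ : Finset (Fin N)).card by
      rw [Finset.card_univ, Fintype.card_fin]; exact hk)
  have hCk : ((N.choose k : ℕ) : ℝ) ≠ 0 := Nat.cast_ne_zero.mpr (Nat.choose_pos hk).ne'
  have hCj : ((N.choose j : ℕ) : ℝ) ≠ 0 := Nat.cast_ne_zero.mpr (Nat.choose_pos hj).ne'
  have h2N : ((2:ℝ)^N) ≠ 0 := by positivity
  have hpow : ((2:ℝ)^N)⁻¹ * (2:ℝ)^N = 1 := inv_mul_cancel₀ h2N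
  have step1 : ((N.choose k : ℝ) * (N.choose j : ℝ)) *
      (∑ i ∈ Finset.range (N + 1),
        (N.choose i : ℝ) * ((ν + (N : ℝ) - (i : ℝ)) * (ν + (i : ℝ)))
          * kraw N i (k : ℝ) * kraw N j (i : ℝ))
      = ∑ T : Finset (Fin N),
          ((ν + (N:ℝ) - (T.card : ℝ)) * (ν + (T.card : ℝ))) * (Fk N k T * Fk N j T) := by
    rw [Finset.mul_sum]
    rw [← sum_group_card (fun T =>
      ((ν + (N:ℝ) - (T.card : ℝ)) * (ν + (T.card : ℝ))) * (Fk N k T * Fk N j T))]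
    refine Finset.sum_congr rfl fun i hi => ?_
    rw [Finset.mem_range, Nat.lt_succ_iff] at hi
    have e1 : ((N.choose i : ℕ) : ℝ) * kraw N i ((S0.card : ℕ) : ℝ) = Fk N i S0 :=
      choose_mul_kraw i hi S0
    rw [hS0] at e1
    calc ((N.choose k : ℝ) * (N.choose j : ℝ)) *
          ((N.choose i : ℝ) * ((ν + (N : ℝ) - (i : ℝ)) * (ν + (i : ℝ)))
            * kraw N i (k : ℝ) * kraw N j (i : ℝ))
        = ((ν + (N : ℝ) - (i : ℝ)) * (ν + (i : ℝ))) *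
            ((N.choose k : ℝ) * ((N.choose i : ℝ) * kraw N i (k : ℝ)))
            * ((N.choose j : ℝ) * kraw N j (i : ℝ)) := by ring
      _ = ((ν + (N : ℝ) - (i : ℝ)) * (ν + (i : ℝ))) *
            (∑ T ∈ Finset.powersetCard i (Finset.univ : Finset (Fin N)), Fk N k T)
            * ((N.choose j : ℝ) * kraw N j (i : ℝ)) := by rw [e1, recip k i S0 hS0]
      _ = ∑ T ∈ Finset.powersetCard i (Finset.univ : Finset (Fin N)),
            ((ν + (N : ℝ) - (i : ℝ)) * (ν + (i : ℝ))) * Fk N k T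
              * ((N.choose j : ℝ) * kraw N j (i : ℝ)) := by
          rw [Finset.mul_sum, Finset.sum_mul]
      _ = ∑ T ∈ Finset.powersetCard i (Finset.univ : Finset (Fin N)),
            ((ν + (N:ℝ) - (T.card : ℝ)) * (ν + (T.card : ℝ))) * (Fk N k T * Fk N j T) := by
          refine Finset.sum_congr rfl fun T hT => ?_
          have hTc : T.card = i := (Finset.mem_powersetCard.1 hT).2
          have e2 : ((N.choose j : ℕ) : ℝ) * kraw N j ((T.card : ℕ) : ℝ) = Fk N j T :=
            choose_mul_kraw j hj T
          rw [hTc] at e2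
          rw [hTc, e2]
          ring
  have step2 : ∑ T : Finset (Fin N),
        ((ν + (N:ℝ) - (T.card : ℝ)) * (ν + (T.card : ℝ))) * (Fk N k T * Fk N j T)
      = (ν * (ν + (N:ℝ)) + (N:ℝ)^2/4) * (∑ T : Finset (Fin N), Fk N k T * Fk N j T)
        - (1/4) * (∑ T : Finset (Fin N),
            (∑ e : Fin N, ch T {e}) * (∑ f : Fin N, ch T {f}) * Fk N k T * Fk N j T) := by
    rw [Finset.mul_sum, Finset.mul_sum, ← Finset.sum_sub_distrib]
    refine Finset.sum_congr rfl fun T _ => ?_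
    rw [dsum_eq]
    ring
  have hG := step1.trans step2
  rw [G0_eq, WQ_eq] at hG
  refine mul_right_cancel₀ (mul_ne_zero hCk hCj) ?_
  have lhs_eq : ((2:ℝ)^N)⁻¹ * (N.choose k : ℝ) *
      (∑ i ∈ Finset.range (N + 1),
        (N.choose i : ℝ) * ((ν + (N : ℝ) - (i : ℝ)) * (ν + (i : ℝ)))
          * kraw N i (k : ℝ) * kraw N j (i : ℝ)) * ((N.choose k : ℝ) * (N.choose j : ℝ))
      = ((2:ℝ)^N)⁻¹ * (N.choose k : ℝ) *
          (((N.choose k : ℝ) * (N.choose j : ℝ)) *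
            (∑ i ∈ Finset.range (N + 1),
              (N.choose i : ℝ) * ((ν + (N : ℝ) - (i : ℝ)) * (ν + (i : ℝ)))
                * kraw N i (k : ℝ) * kraw N j (i : ℝ))) := by ring
  rw [lhs_eq, hG]
  by_cases h1 : j = k + 2
  · subst h1
    rw [if_pos rfl]
    have hne : ¬(k + 2 = k) := by omega
    rw [if_neg hne, if_neg hne]
    have hk2 : k + 2 ≤ N := hj
    have hN1 : 1 ≤ N := by omega
    have hidR : (N:ℝ) * ((N - 1 : ℕ) : ℝ) * (((N - 2).choose k : ℕ) : ℝ)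
        = ((k:ℝ) + 1) * ((k:ℝ) + 2) * ((N.choose (k + 2) : ℕ) : ℝ) := by
      exact_mod_cast congrArg (Nat.cast (R := ℝ)) (nat_id1 hk2)
    rw [pcnt, if_pos rfl]
    linear_combination (-(1/4) * ((N.choose k : ℕ) : ℝ) * ((2:ℝ)^N)⁻¹ * (2:ℝ)^N) * hidR +
      (-(1/4) * ((N.choose k : ℕ) : ℝ) * ((k:ℝ) + 1) * ((k:ℝ) + 2)
        * ((N.choose (k + 2) : ℕ) : ℝ)) * hpow
  · rw [if_neg h1]
    by_cases h2 : j = k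
    · subst h2
      rw [if_pos rfl, if_pos rfl, if_pos rfl, pcnt, if_neg h1, if_pos rfl]
      by_cases h3 : 1 ≤ j
      · rw [if_pos h3]
        have hN1 : 1 ≤ N := le_trans h3 hk
        have hcast : ((N - 1 : ℕ) : ℝ) = (N:ℝ) - 1 := by
          push_cast [Nat.cast_sub hN1]
          ring
        rw [hcast]
        have hh : ((N * (N - 1) * ((N - 2).choose (j - 1)) : ℕ) : ℝ)
            = ((j * (N - j) * (N.choose j) : ℕ) : ℝ) := by
          exact_mod_cast nat_id2 h3 hk
        push_cast [Nat.cast_sub hk, Nat.cast_sub hN1] at hh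
        push_cast
        linear_combination (-(1/2) * ((2:ℝ)^N)⁻¹ * (2:ℝ)^N * ((N.choose j : ℕ) : ℝ)) * hh +
          (((N.choose j : ℕ) : ℝ) * ((N.choose j : ℕ) : ℝ)
            * (ν * (ν + (N:ℝ)) + (N:ℝ)^2/4 - (N:ℝ)/4 - (j:ℝ) * ((N:ℝ) - (j:ℝ))/2)) * hpow
      · rw [if_neg h3]
        have hj0 : j = 0 := by omega
        subst hj0
        push_cast
        linear_combination (((N.choose 0 : ℕ) : ℝ) * ((N.choose 0 : ℕ) : ℝ)
          * (ν * (ν + (N:ℝ)) + (N:ℝ)^2/4 - (N:ℝ)/4)) * hpow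
    · rw [if_neg h2, if_neg h2, if_neg h2]
      by_cases h4 : j + 2 = k
      · rw [if_pos h4, pcnt, if_neg h1, if_neg h2, if_pos h4]
        have hk2 : 2 ≤ k := by omega
        have hN1 : 1 ≤ N := by omega
        have hcast : ((N - 1 : ℕ) : ℝ) = (N:ℝ) - 1 := by
          push_cast [Nat.cast_sub hN1]
          ring
        rw [hcast]
        have hh : ((N * (N - 1) * ((N - 2).choose (k - 2)) : ℕ) : ℝ)
            = (((N - k + 1) * (N - k + 2) * (N.choose (k - 2)) : ℕ) : ℝ) := by
          exact_mod_cast nat_id3 h4 hk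
        push_cast [Nat.cast_sub hk, Nat.cast_sub hN1] at hh
        have hjk : k - 2 = j := by omega
        rw [hjk] at hh
        rw [hjk]
        linear_combination (-(1/4) * ((2:ℝ)^N)⁻¹ * (2:ℝ)^N * ((N.choose k : ℕ) : ℝ)) * hh +
          (-(1/4) * ((N.choose k : ℕ) : ℝ) * ((N:ℝ) - (k:ℝ) + 1) * ((N:ℝ) - (k:ℝ) + 2)
            * ((N.choose j : ℕ) : ℝ)) * hpow
      · rw [if_neg h4, pcnt, if_neg h1, if_neg h2, if_neg h4]
        push_cast
        ring
end

section
/- Let N ∈ ℕ and set ℓ := N/2. Then for all k, j ∈ {0,…,N}: (1) Σ_{i=0}^{N} C(N,i)· i · K_k(i) K_j(i) = 2^{N} C(N,k)^{−1} · c₁(k,j), where c₁(k,j) = −(k+1)/2 if j = k+1, c₁(k,j) = ℓ if j = k, c₁(k,j) = −(N−k+1)/2 if j = k−1, and c₁(k,j) = 0 otherwise; (2) Σ_{i=0}^{N} C(N,i)· i² · K_k(i) K_j(i) = 2^{N} C(N,k)^{−1} · c₂(k,j), where c₂(k,j) = (k+1)(k+2)/4 if j = k+2, c₂(k,j) = −ℓ(k+1)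 if j = k+1, c₂(k,j) = ℓ(ℓ+1/2) + k(ℓ−k/2) if j = k, c₂(k,j) = −ℓ(N−k+1) if j = k−1, c₂(k,j) = (N−k+1)(N−k+2)/4 if j = k−2, and c₂(k,j) = 0 otherwise. -/
open Polynomial Finset

lemma asc_eval_neg_nat (n s : ℕ) :
    (ascPochhammer ℝ s).eval (-(n : ℝ)) = (-1) ^ s * (s.factorial * n.choose s : ℕ) := by
  rw [ascPochhammer_eval_neg_eq_descPochhammer, descPochhammer_eval_eq_descFactorial,
    Nat.descFactorial_eq_factorial_mul_choose]

lemma kraw_mul_choose (N k i : ℕ) (hk : k ≤ N) :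
    (N.choose k : ℝ) * kraw N k (i : ℝ) =
      ∑ s ∈ Finset.range (k + 1), (-2 : ℝ) ^ s * (i.choose s) * ((N - s).choose (k - s)) := by
  rw [kraw, Finset.mul_sum]
  refine Finset.sum_congr rfl fun s hs => ?_
  rw [Finset.mem_range] at hs
  have hsk : s ≤ k := Nat.lt_succ_iff.mp hs
  rw [asc_eval_neg_nat, asc_eval_neg_nat, asc_eval_neg_nat]
  have hNs : (N.choose s : ℝ) ≠ 0 := by
    exact_mod_cast Nat.choose_pos (hsk.trans hk) |>.ne'
  have hfs : (s.factorial : ℝ) ≠ 0 := by exact_mod_cast s.factorial_ne_zero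
  have hcm : ((N.choose k : ℕ) * k.choose s : ℝ) = ((N.choose s : ℕ) * (N - s).choose (k - s) : ℝ) := by
    exact_mod_cast congrArg (Nat.cast (R := ℝ)) (Nat.choose_mul (n := N) hsk)
  push_cast at hcm ⊢
  rcases Nat.even_or_odd s with hpar | hpar
  · rw [hpar.neg_one_pow, hpar.neg_pow]
    field_simp
    linear_combination (i.choose s:ℝ) * hcm
  · rw [hpar.neg_one_pow, hpar.neg_pow]
    field_simp
    linear_combination (-(i.choose s:ℝ)) * hcm

noncomputable def q (N i : ℕ) : Polynomial ℝ := (1 - X) ^ i * (1 + X) ^ (N - i)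

lemma q_coeff (N i k : ℕ) (hi : i ≤ N) (hk : k ≤ N) :
    (q N i).coeff k =
      ∑ s ∈ Finset.range (k + 1), (-2 : ℝ) ^ s * (i.choose s) * ((N - s).choose (k - s)) := by
  have hq : q N i = ∑ s ∈ Finset.range (i + 1),
      C ((-2 : ℝ) ^ s * (i.choose s)) * (X ^ s * (1 + X) ^ (N - s)) := by
    rw [q]
    have h1 : (1 - X : Polynomial ℝ) = C (-2) * X + (1 + X) := by
      rw [map_neg, map_ofNat]; ring
    rw [h1, add_pow, Finset.sum_mul]
    refine Finset.sum_congr rfl fun s hs => ?_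
    rw [Finset.mem_range, Nat.lt_succ_iff] at hs
    have hpow : ((1 + X : Polynomial ℝ) ^ (i - s)) * (1 + X) ^ (N - i) = (1 + X) ^ (N - s) := by
      rw [← pow_add]; congr 1; omega
    calc (C (-2 : ℝ) * X) ^ s * (1 + X) ^ (i - s) * ↑(i.choose s) * (1 + X) ^ (N - i)
        = (C (-2 : ℝ) ^ s * C ((i.choose s : ℝ))) * (X ^ s * ((1 + X) ^ (i - s) * (1 + X) ^ (N - i))) := by
          rw [mul_pow, C_eq_natCast]; ring
      _ = C ((-2 : ℝ) ^ s * (i.choose s)) * (X ^ s * (1 + X) ^ (N - s)) := by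
          rw [hpow, ← C_pow, ← C_mul]
  rw [hq, finset_sum_coeff]
  have hterm : ∀ s, (C ((-2 : ℝ) ^ s * (i.choose s)) * (X ^ s * (1 + X) ^ (N - s))).coeff k =
      if s ≤ k then (-2 : ℝ) ^ s * (i.choose s) * ((N - s).choose (k - s)) else 0 := by
    intro s
    rw [coeff_C_mul, coeff_X_pow_mul', coeff_one_add_X_pow]
    split <;> simp [mul_assoc]
  simp only [hterm]
  have e1 : ∑ s ∈ Finset.range (i + 1),
      (if s ≤ k then (-2 : ℝ) ^ s * (i.choose s) * ((N - s).choose (k - s)) else 0)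
      = ∑ s ∈ Finset.range (N + 1),
      (if s ≤ k then (-2 : ℝ) ^ s * (i.choose s) * ((N - s).choose (k - s)) else 0) := by
    refine Finset.sum_subset (by intro x hx; simp only [Finset.mem_range] at *; omega) ?_
    intro s hs hsi
    simp only [Finset.mem_range] at hs hsi
    have : i < s := by omega
    rw [Nat.choose_eq_zero_of_lt this]
    simp
  have e2 : ∑ s ∈ Finset.range (k + 1),
      (-2 : ℝ) ^ s * (i.choose s) * ((N - s).choose (k - s))
      = ∑ s ∈ Finset.range (N + 1),
      (if s ≤ k then (-2 : ℝ) ^ s * (i.choose s) * ((N - s).choose (k - s)) else 0) := by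
    calc ∑ s ∈ Finset.range (k + 1), (-2 : ℝ) ^ s * (i.choose s) * ((N - s).choose (k - s))
        = ∑ s ∈ Finset.range (k + 1),
          (if s ≤ k then (-2 : ℝ) ^ s * (i.choose s) * ((N - s).choose (k - s)) else 0) :=
          Finset.sum_congr rfl fun s hs => by
            rw [Finset.mem_range, Nat.lt_succ_iff] at hs
            rw [if_pos hs]
      _ = _ := Finset.sum_subset (Finset.range_subset_range.mpr (by omega)) fun s hs hns => by
            simp only [Finset.mem_range] at hs hns
            rw [if_neg (by omega)]
  rw [e1, e2]

abbrev BP : Type := Polynomial (Polynomial ℝ)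

noncomputable def uu : BP := (1 - X) * C (1 - X)
noncomputable def vv : BP := (1 + X) * C (1 + X)
noncomputable def dd : BP := 1 + X * C X

lemma uv_eq : uu + vv = 2 * dd := by
  rw [uu, vv, dd, map_sub, map_add, map_one]; ring

-- coefficient of a single bivariate monomial
lemma coeff_bimono (r : ℝ) (p qq k j : ℕ) :
    (((C (C r) * (X ^ p * C (X ^ qq)) : BP).coeff k).coeff j)
      = if k = p ∧ j = qq then r else 0 := by
  have h1 : (C (C r) * (X ^ p * C (X ^ qq)) : BP) = C (C r * X ^ qq) * X ^ p := by
    rw [map_mul]; ring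
  rw [h1, coeff_C_mul_X_pow]
  by_cases hkp : k = p
  · rw [if_pos hkp, coeff_C_mul, coeff_X_pow]
    by_cases hjq : j = qq
    · rw [if_pos hjq, if_pos ⟨hkp, hjq⟩, mul_one]
    · rw [if_neg hjq, if_neg (by tauto), mul_zero]
  · rw [if_neg hkp, if_neg (by tauto), coeff_zero]

-- expansion of dd ^ M
lemma dd_pow (M : ℕ) : (dd : BP) ^ M
    = ∑ s ∈ Finset.range (M + 1), C (C ((M.choose s : ℝ))) * (X ^ s * C (X ^ s)) := by
  rw [dd, add_comm (1 : BP), add_pow]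
  refine Finset.sum_congr rfl fun s hs => ?_
  rw [mul_pow, one_pow, mul_one, ← map_pow, map_natCast, map_natCast]
  ring

-- E_mono
lemma e_mono (a b M k j : ℕ) :
    ((((X : BP) ^ a * C (X ^ b) * dd ^ M).coeff k).coeff j)
      = if a ≤ k ∧ j = b + (k - a) then ((M.choose (k - a) : ℝ)) else 0 := by
  rw [dd_pow, Finset.mul_sum]
  have hterm : ∀ s, (X : BP) ^ a * C (X ^ b) * (C (C ((M.choose s : ℝ))) * (X ^ s * C (X ^ s)))
      = C (C ((M.choose s : ℝ))) * (X ^ (a + s) * C (X ^ (b + s))) := by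
    intro s
    rw [pow_add, pow_add, map_mul]
    ring
  simp only [hterm]
  rw [finset_sum_coeff, finset_sum_coeff]
  simp only [coeff_bimono]
  by_cases hc : a ≤ k ∧ j = b + (k - a)
  · rw [if_pos hc]
    rw [Finset.sum_eq_single (k - a)]
    · rw [if_pos ⟨by omega, by omega⟩]
    · intro s hs hne
      rw [if_neg]
      rintro ⟨h1, h2⟩
      exact hne (by omega)
    · intro hnot
      simp only [Finset.mem_range] at hnot
      rw [Nat.choose_eq_zero_of_lt (by omega), Nat.cast_zero, if_pos ⟨by omega, by omega⟩]
  · rw [if_neg hc]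
    apply Finset.sum_eq_zero
    intro s hs
    rw [if_neg]
    rintro ⟨h1, h2⟩
    exact hc ⟨by omega, by omega⟩


lemma Q_eq (N i : ℕ) (hi : i ≤ N) :
    ((q N i).map (C : ℝ →+* Polynomial ℝ)) * C (q N i) = uu ^ i * vv ^ (N - i) := by
  rw [q, uu, vv, Polynomial.map_mul, Polynomial.map_pow, Polynomial.map_pow,
    Polynomial.map_sub, Polynomial.map_add, Polynomial.map_one, map_X,
    map_mul, map_pow, map_pow, mul_pow, mul_pow]
  ring

lemma I0 (n : ℕ) :
    ∑ i ∈ Finset.range (n + 1), (n.choose i) • (uu ^ i * vv ^ (n - i)) = (uu + vv) ^ n := by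
  rw [add_pow]
  exact Finset.sum_congr rfl fun i _ => by rw [nsmul_eq_mul]; ring

lemma I1 (n : ℕ) :
    ∑ i ∈ Finset.range (n + 1), (i * n.choose i) • (uu ^ i * vv ^ (n - i))
      = n • (uu * (uu + vv) ^ (n - 1)) := by
  cases n with
  | zero => simp
  | succ M =>
    rw [Finset.sum_range_succ']
    simp only [Nat.zero_mul, zero_smul, add_zero]
    rw [Nat.succ_sub_one]
    have hco : ∀ m, ((m + 1) * (M + 1).choose (m + 1)) = (M + 1) * M.choose m := by
      intro m
      rw [mul_comm, ← Nat.add_one_mul_choose_eq]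
    calc ∑ m ∈ Finset.range (M + 1), ((m + 1) * (M + 1).choose (m + 1)) • (uu ^ (m + 1) * vv ^ (M + 1 - (m + 1)))
        = ∑ m ∈ Finset.range (M + 1), (M + 1) • (M.choose m • (uu * (uu ^ m * vv ^ (M - m)))) := by
          refine Finset.sum_congr rfl fun m hm => ?_
          rw [hco, mul_smul]
          congr 1
          rw [Nat.succ_sub_succ]
          rw [pow_succ]
          congr 1
          ring
      _ = (M + 1) • (uu * (uu + vv) ^ M) := by
          rw [← Finset.smul_sum]
          congr 1
          rw [← I0 M, Finset.mul_sum]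
          exact Finset.sum_congr rfl fun m hm => by rw [mul_smul_comm]

lemma I2 (n : ℕ) :
    ∑ i ∈ Finset.range (n + 1), (i * (i - 1) * n.choose i) • (uu ^ i * vv ^ (n - i))
      = (n * (n - 1)) • (uu ^ 2 * (uu + vv) ^ (n - 2)) := by
  match n with
  | 0 => simp
  | 1 => simp [Finset.sum_range_succ]
  | (M + 2) =>
    rw [Finset.sum_range_succ', Finset.sum_range_succ']
    simp only [Nat.zero_mul, zero_smul, add_zero, Nat.mul_zero]
    have h0 : ((0 + 1) * ((0 + 1) - 1) * (M + 2).choose (0 + 1)) • (uu ^ (0 + 1) * vv ^ (M + 2 - (0 + 1))) = 0 := by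
      norm_num
    rw [h0, add_zero]
    have hco : ∀ m, ((m + 1 + 1) * ((m + 1 + 1) - 1) * (M + 2).choose (m + 1 + 1))
        = ((M + 2) * (M + 1)) * M.choose m := by
      intro m
      have h1 : (M + 2) * (M + 1).choose (m + 1) = (M + 2).choose (m + 2) * (m + 2) :=
        Nat.add_one_mul_choose_eq (M + 1) (m + 1)
      have h2 : (M + 1) * M.choose m = (M + 1).choose (m + 1) * (m + 1) :=
        Nat.add_one_mul_choose_eq M m
      simp only [Nat.add_sub_cancel]
      calc (m + 2) * (m + 1) * (M + 2).choose (m + 2)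
          = ((M + 2).choose (m + 2) * (m + 2)) * (m + 1) := by ring
        _ = ((M + 2) * ((M + 1).choose (m + 1) * (m + 1))) := by rw [← h1]; ring
        _ = (M + 2) * ((M + 1) * M.choose m) := by rw [← h2]
        _ = _ := by ring
    calc ∑ m ∈ Finset.range (M + 1),
          ((m + 1 + 1) * ((m + 1 + 1) - 1) * (M + 2).choose (m + 1 + 1)) • (uu ^ (m + 1 + 1) * vv ^ (M + 2 - (m + 1 + 1)))
        = ∑ m ∈ Finset.range (M + 1), ((M + 2) * (M + 1)) • (M.choose m • (uu ^ 2 * (uu ^ m * vv ^ (M - m)))) := by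
          refine Finset.sum_congr rfl fun m hm => ?_
          rw [hco, mul_smul]
          refine congrArg _ ?_
          have : M + 2 - (m + 1 + 1) = M - m := by omega
          rw [this]
          congr 1
          ring
      _ = ((M + 2) * (M + 1)) • (uu ^ 2 * (uu + vv) ^ M) := by
          rw [← Finset.smul_sum]
          congr 1
          rw [← I0 M, Finset.mul_sum]
          exact Finset.sum_congr rfl fun m hm => by rw [mul_smul_comm]
      _ = _ := by norm_num

noncomputable def E1 (M k j : ℕ) : ℝ :=
    (if 0 ≤ k ∧ j = 0 + (k - 0) then ((M.choose (k - 0) : ℝ)) else 0)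
  - (if 1 ≤ k ∧ j = 0 + (k - 1) then ((M.choose (k - 1) : ℝ)) else 0)
  - (if 0 ≤ k ∧ j = 1 + (k - 0) then ((M.choose (k - 0) : ℝ)) else 0)
  + (if 1 ≤ k ∧ j = 1 + (k - 1) then ((M.choose (k - 1) : ℝ)) else 0)

noncomputable def E3 (M k j : ℕ) : ℝ :=
    (if 0 ≤ k ∧ j = 0 + (k - 0) then ((M.choose (k - 0) : ℝ)) else 0)
  - 2 * (if 1 ≤ k ∧ j = 0 + (k - 1) then ((M.choose (k - 1) : ℝ)) else 0)
  + (if 2 ≤ k ∧ j = 0 + (k - 2) then ((M.choose (k - 2) : ℝ)) else 0)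
  - 2 * (if 0 ≤ k ∧ j = 1 + (k - 0) then ((M.choose (k - 0) : ℝ)) else 0)
  + 4 * (if 1 ≤ k ∧ j = 1 + (k - 1) then ((M.choose (k - 1) : ℝ)) else 0)
  - 2 * (if 2 ≤ k ∧ j = 1 + (k - 2) then ((M.choose (k - 2) : ℝ)) else 0)
  + (if 0 ≤ k ∧ j = 2 + (k - 0) then ((M.choose (k - 0) : ℝ)) else 0)
  - 2 * (if 1 ≤ k ∧ j = 2 + (k - 1) then ((M.choose (k - 1) : ℝ)) else 0)
  + (if 2 ≤ k ∧ j = 2 + (k - 2) then ((M.choose (k - 2) : ℝ)) else 0)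

lemma e_uD (M k j : ℕ) : (((uu * dd ^ M).coeff k).coeff j) = E1 M k j := by
  have hx : uu * dd ^ M =
      X ^ 0 * C (X ^ 0) * dd ^ M - X ^ 1 * C (X ^ 0) * dd ^ M
      - X ^ 0 * C (X ^ 1) * dd ^ M + X ^ 1 * C (X ^ 1) * dd ^ M := by
    rw [uu, map_sub, map_one]
    simp only [pow_zero, pow_one, map_one, map_pow]
    ring
  rw [hx, E1]
  simp only [coeff_add, coeff_sub, e_mono]

lemma e_u2D (M k j : ℕ) : (((uu ^ 2 * dd ^ M).coeff k).coeff j) = E3 M k j := by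
  have h2 : (C (C (2 : ℝ)) : BP) = 2 := by rw [map_ofNat, map_ofNat]
  have h4 : (C (C (4 : ℝ)) : BP) = 4 := by rw [map_ofNat, map_ofNat]
  have hx : uu ^ 2 * dd ^ M =
      X ^ 0 * C (X ^ 0) * dd ^ M - C (C (2:ℝ)) * (X ^ 1 * C (X ^ 0) * dd ^ M)
      + X ^ 2 * C (X ^ 0) * dd ^ M - C (C (2:ℝ)) * (X ^ 0 * C (X ^ 1) * dd ^ M)
      + C (C (4:ℝ)) * (X ^ 1 * C (X ^ 1) * dd ^ M) - C (C (2:ℝ)) * (X ^ 2 * C (X ^ 1) * dd ^ M)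
      + X ^ 0 * C (X ^ 2) * dd ^ M - C (C (2:ℝ)) * (X ^ 1 * C (X ^ 2) * dd ^ M)
      + X ^ 2 * C (X ^ 2) * dd ^ M := by
    rw [h2, h4, uu, map_sub, map_one]
    simp only [pow_zero, pow_one, map_one, map_pow]
    ring
  rw [hx, E3]
  simp only [coeff_add, coeff_sub, coeff_C_mul, e_mono]

lemma master (N k j : ℕ) (c : ℕ → ℕ) (T : BP)
    (hT : ∑ i ∈ Finset.range (N + 1), (c i) • (uu ^ i * vv ^ (N - i)) = T) :
    ∑ i ∈ Finset.range (N + 1), ((c i : ℝ)) * ((q N i).coeff k * (q N i).coeff j)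
      = ((T.coeff k).coeff j) := by
  rw [← hT, finset_sum_coeff, finset_sum_coeff]
  refine Finset.sum_congr rfl fun i hi => ?_
  rw [Finset.mem_range, Nat.lt_succ_iff] at hi
  rw [coeff_smul, coeff_smul, ← Q_eq N i hi, coeff_mul_C, coeff_map, coeff_C_mul,
    nsmul_eq_mul]

lemma e_two_pow_mul (m : ℕ) (W : BP) (k j : ℕ) :
    ((((2 : BP) ^ m * W).coeff k).coeff j) = 2 ^ m * ((W.coeff k).coeff j) := by
  have h2 : (2 : BP) = C (C (2 : ℝ)) := by rw [map_ofNat, map_ofNat]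
  rw [h2, ← map_pow, ← map_pow, coeff_C_mul, coeff_C_mul]

lemma E1_none (M k j : ℕ) (h0 : j ≠ k) (h1 : j ≠ k + 1) (h2 : j + 1 ≠ k) : E1 M k j = 0 := by
  rw [E1, if_neg (by omega), if_neg (by omega), if_neg (by omega), if_neg (by omega)]
  ring

lemma E1_up (M k : ℕ) : E1 M k (k + 1) = -(M.choose k : ℝ) := by
  rw [E1, if_neg (by omega), if_neg (by omega), if_pos (by omega), if_neg (by omega)]
  rw [Nat.sub_zero]
  ring

lemma E1_diag0 (M : ℕ) : E1 M 0 0 = (M.choose 0 : ℝ) := by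
  rw [E1, if_pos (by omega), if_neg (by omega), if_neg (by omega), if_neg (by omega)]
  rw [Nat.sub_zero]
  ring

lemma E1_diag (M t : ℕ) : E1 M (t + 1) (t + 1) = (M.choose (t + 1) : ℝ) + (M.choose t : ℝ) := by
  rw [E1, if_pos (by omega), if_neg (by omega), if_neg (by omega), if_pos (by omega)]
  rw [Nat.sub_zero, Nat.add_sub_cancel]
  ring

lemma E1_down (M j : ℕ) : E1 M (j + 1) j = -(M.choose j : ℝ) := by
  rw [E1, if_neg (by omega), if_pos (by omega), if_neg (by omega), if_neg (by omega)]
  rw [Nat.add_sub_cancel]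
  ring

lemma E3_none (M k j : ℕ) (h0 : j ≠ k) (h1 : j ≠ k + 1) (h2 : j + 1 ≠ k)
    (h3 : j ≠ k + 2) (h4 : j + 2 ≠ k) : E3 M k j = 0 := by
  rw [E3, if_neg (by omega), if_neg (by omega), if_neg (by omega), if_neg (by omega),
    if_neg (by omega), if_neg (by omega), if_neg (by omega), if_neg (by omega),
    if_neg (by omega)]
  ring

lemma E3_up2 (M k : ℕ) : E3 M k (k + 2) = (M.choose k : ℝ) := by
  rw [E3, if_neg (by omega), if_neg (by omega), if_neg (by omega), if_neg (by omega),
    if_neg (by omega), if_neg (by omega), if_pos (by omega), if_neg (by omega),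
    if_neg (by omega)]
  rw [Nat.sub_zero]
  ring

lemma E3_up1_0 (M : ℕ) : E3 M 0 1 = -2 * (M.choose 0 : ℝ) := by
  rw [E3, if_neg (by omega), if_neg (by omega), if_neg (by omega), if_pos (by omega),
    if_neg (by omega), if_neg (by omega), if_neg (by omega), if_neg (by omega),
    if_neg (by omega)]
  rw [Nat.sub_zero]
  ring

lemma E3_up1 (M t : ℕ) : E3 M (t + 1) (t + 2) = -2 * (M.choose (t + 1) : ℝ) - 2 * (M.choose t : ℝ) := by
  rw [E3, if_neg (by omega), if_neg (by omega), if_neg (by omega), if_pos (by omega),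
    if_neg (by omega), if_neg (by omega), if_neg (by omega), if_pos (by omega),
    if_neg (by omega)]
  rw [Nat.sub_zero, Nat.add_sub_cancel]
  ring

lemma E3_diag0 (M : ℕ) : E3 M 0 0 = (M.choose 0 : ℝ) := by
  rw [E3, if_pos (by omega), if_neg (by omega), if_neg (by omega), if_neg (by omega),
    if_neg (by omega), if_neg (by omega), if_neg (by omega), if_neg (by omega),
    if_neg (by omega)]
  rw [Nat.sub_zero]
  ring

lemma E3_diag1 (M : ℕ) : E3 M 1 1 = (M.choose 1 : ℝ) + 4 * (M.choose 0 : ℝ) := by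
  rw [E3, if_pos (by omega), if_neg (by omega), if_neg (by omega), if_neg (by omega),
    if_pos (by omega), if_neg (by omega), if_neg (by omega), if_neg (by omega),
    if_neg (by omega)]
  rw [Nat.sub_zero, Nat.sub_self]
  ring

lemma E3_diag (M t : ℕ) : E3 M (t + 2) (t + 2)
    = (M.choose (t + 2) : ℝ) + 4 * (M.choose (t + 1) : ℝ) + (M.choose t : ℝ) := by
  rw [E3, if_pos (by omega), if_neg (by omega), if_neg (by omega), if_neg (by omega),
    if_pos (by omega), if_neg (by omega), if_neg (by omega), if_neg (by omega),
    if_pos (by omega)]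
  rw [Nat.sub_zero, Nat.add_sub_cancel, show t + 2 - 1 = t + 1 from by omega]
  ring

lemma E3_down1_0 (M : ℕ) : E3 M 1 0 = -2 * (M.choose 0 : ℝ) := by
  rw [E3, if_neg (by omega), if_pos (by omega), if_neg (by omega), if_neg (by omega),
    if_neg (by omega), if_neg (by omega), if_neg (by omega), if_neg (by omega),
    if_neg (by omega)]
  rw [Nat.sub_self]
  ring

lemma E3_down1 (M t : ℕ) : E3 M (t + 2) (t + 1)
    = -2 * (M.choose (t + 1) : ℝ) - 2 * (M.choose t : ℝ) := by
  rw [E3, if_neg (by omega), if_pos (by omega), if_neg (by omega), if_neg (by omega),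
    if_neg (by omega), if_pos (by omega), if_neg (by omega), if_neg (by omega),
    if_neg (by omega)]
  rw [Nat.add_sub_cancel, show t + 2 - 1 = t + 1 from by omega]
  ring

lemma E3_down2 (M j : ℕ) : E3 M (j + 2) j = (M.choose j : ℝ) := by
  rw [E3, if_neg (by omega), if_neg (by omega), if_pos (by omega), if_neg (by omega),
    if_neg (by omega), if_neg (by omega), if_neg (by omega), if_neg (by omega),
    if_neg (by omega)]
  rw [Nat.add_sub_cancel]
  ring

lemma chooseR (n k : ℕ) : ((n : ℝ) + 1) * (n.choose k) = ((n + 1).choose (k + 1) : ℝ) * ((k : ℝ) + 1) := by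
  exact_mod_cast Nat.add_one_mul_choose_eq n k

lemma pascalR (n t : ℕ) : ((n + 1).choose (t + 1) : ℝ) = (n.choose t : ℝ) + (n.choose (t + 1) : ℝ) := by
  exact_mod_cast Nat.choose_succ_succ' n t

lemma rightR (n k : ℕ) (h : k ≤ n) :
    (n.choose (k + 1) : ℝ) * ((k : ℝ) + 1) = (n.choose k : ℝ) * ((n : ℝ) - (k : ℝ)) := by
  have h2 := Nat.choose_succ_right_eq n k
  have : ((n - k : ℕ) : ℝ) = (n : ℝ) - (k : ℝ) := by
    rw [Nat.cast_sub h]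
  rw [← this]
  exact_mod_cast h2

lemma crossR (m t : ℕ) (h : t ≤ m) :
    ((m : ℝ) + 2) * ((m : ℝ) + 1) * (m.choose (t + 1)) =
      ((t : ℝ) + 2) * ((m : ℝ) - (t : ℝ)) * ((m + 2).choose (t + 2)) := by
  have H1 := chooseR m (t + 1)
  have H2 := chooseR (m + 1) (t + 2)
  have H3 := rightR (m + 2) (t + 2) (by omega)
  push_cast at H1 H2 H3 ⊢
  linear_combination ((m : ℝ) + 2) * H1 + ((t : ℝ) + 2) * H2 + ((t : ℝ) + 2) * H3

lemma nat_sq_split (i : ℕ) : i ^ 2 * c = i * c + i * (i - 1) * c := by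
  cases i with
  | zero => simp
  | succ n => simp only [Nat.succ_sub_one]; ring

/-- the weighted sums `Σ_i C(N,i) iᵖ K_k(i) K_j(i)` for `p = 1, 2`. -/
theorem stmt15 (N : ℕ) (ℓ : ℝ) (hℓ : ℓ = (N : ℝ) / 2) :
    ∀ k j : ℕ, k ≤ N → j ≤ N →
      ((∑ i ∈ Finset.range (N + 1),
          (N.choose i : ℝ) * (i : ℝ) * kraw N k (i : ℝ) * kraw N j (i : ℝ))
        = (2 : ℝ) ^ N * ((N.choose k : ℝ))⁻¹ *
            (if j = k + 1 then -((k : ℝ) + 1) / 2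
             else if j = k then ℓ
             else if j + 1 = k then -((N : ℝ) - (k : ℝ) + 1) / 2
             else 0))
      ∧ ((∑ i ∈ Finset.range (N + 1),
          (N.choose i : ℝ) * (i : ℝ) ^ 2 * kraw N k (i : ℝ) * kraw N j (i : ℝ))
        = (2 : ℝ) ^ N * ((N.choose k : ℝ))⁻¹ *
            (if j = k + 2 then ((k : ℝ) + 1) * ((k : ℝ) + 2) / 4
             else if j = k + 1 then -ℓ * ((k : ℝ) + 1)
             else if j = k then ℓ * (ℓ + 1/2) + (k : ℝ) * (ℓ - (k : ℝ)/2)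
             else if j + 1 = k then -ℓ * ((N : ℝ) - (k : ℝ) + 1)
             else if j + 2 = k then ((N : ℝ) - (k : ℝ) + 1) * ((N : ℝ) - (k : ℝ) + 2) / 4
             else 0)) := by
  intro k j hk hj
  have hck : (N.choose k : ℝ) ≠ 0 := by exact_mod_cast (Nat.choose_pos hk).ne'
  have hcj : (N.choose j : ℝ) ≠ 0 := by exact_mod_cast (Nat.choose_pos hj).ne'
  have hqk : ∀ i, i ≤ N → (q N i).coeff k = (N.choose k : ℝ) * kraw N k (i : ℝ) :=
    fun i hi => (q_coeff N i k hi hk).trans (kraw_mul_choose N k i hk).symm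
  have hqj : ∀ i, i ≤ N → (q N i).coeff j = (N.choose j : ℝ) * kraw N j (i : ℝ) :=
    fun i hi => (q_coeff N i j hi hj).trans (kraw_mul_choose N j i hj).symm
  -- master identity, part 1
  have m1 : ∑ i ∈ Finset.range (N + 1),
      (((i * N.choose i : ℕ) : ℝ)) * ((q N i).coeff k * (q N i).coeff j)
      = (N : ℝ) * (2 ^ (N - 1) * E1 (N - 1) k j) := by
    rw [master N k j (fun i => i * N.choose i) _ (I1 N)]
    have hT1 : (N • (uu * (uu + vv) ^ (N - 1)) : BP)
        = N • ((2 : BP) ^ (N - 1) * (uu * dd ^ (N - 1))) := by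
      rw [uv_eq, mul_pow]; ring_nf
    rw [hT1, coeff_smul, coeff_smul, e_two_pow_mul, e_uD, nsmul_eq_mul]
  -- master identity, part 2
  have m2 : ∑ i ∈ Finset.range (N + 1),
      (((i ^ 2 * N.choose i : ℕ) : ℝ)) * ((q N i).coeff k * (q N i).coeff j)
      = (N : ℝ) * (2 ^ (N - 1) * E1 (N - 1) k j)
        + ((N * (N - 1) : ℕ) : ℝ) * (2 ^ (N - 2) * E3 (N - 2) k j) := by
    have hT : ∑ i ∈ Finset.range (N + 1), (i ^ 2 * N.choose i) • (uu ^ i * vv ^ (N - i))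
        = N • (uu * (uu + vv) ^ (N - 1)) + (N * (N - 1)) • (uu ^ 2 * (uu + vv) ^ (N - 2)) := by
      simp only [nat_sq_split, add_smul, Finset.sum_add_distrib, I1, I2]
    rw [master N k j (fun i => i ^ 2 * N.choose i) _ hT]
    have hT1 : (N • (uu * (uu + vv) ^ (N - 1)) : BP)
        = N • ((2 : BP) ^ (N - 1) * (uu * dd ^ (N - 1))) := by
      rw [uv_eq, mul_pow]; ring_nf
    have hT2 : ((N * (N - 1)) • (uu ^ 2 * (uu + vv) ^ (N - 2)) : BP)
        = (N * (N - 1)) • ((2 : BP) ^ (N - 2) * (uu ^ 2 * dd ^ (N - 2))) := by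
      rw [uv_eq, mul_pow]; ring_nf
    rw [hT1, hT2, coeff_add, coeff_add, coeff_smul, coeff_smul, coeff_smul, coeff_smul,
      e_two_pow_mul, e_two_pow_mul, e_uD, e_u2D, nsmul_eq_mul, nsmul_eq_mul]
  -- converting the goal sums
  have conv1 : (N.choose k : ℝ) * ((N.choose j : ℝ) * ∑ i ∈ Finset.range (N + 1),
      (N.choose i : ℝ) * (i : ℝ) * kraw N k (i : ℝ) * kraw N j (i : ℝ))
      = ∑ i ∈ Finset.range (N + 1),
      (((i * N.choose i : ℕ) : ℝ)) * ((q N i).coeff k * (q N i).coeff j) := by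
    rw [Finset.mul_sum, Finset.mul_sum]
    refine Finset.sum_congr rfl fun i hi => ?_
    rw [Finset.mem_range, Nat.lt_succ_iff] at hi
    rw [hqk i hi, hqj i hi]
    push_cast
    ring
  have conv2 : (N.choose k : ℝ) * ((N.choose j : ℝ) * ∑ i ∈ Finset.range (N + 1),
      (N.choose i : ℝ) * (i : ℝ) ^ 2 * kraw N k (i : ℝ) * kraw N j (i : ℝ))
      = ∑ i ∈ Finset.range (N + 1),
      (((i ^ 2 * N.choose i : ℕ) : ℝ)) * ((q N i).coeff k * (q N i).coeff j) := by
    rw [Finset.mul_sum, Finset.mul_sum]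
    refine Finset.sum_congr rfl fun i hi => ?_
    rw [Finset.mem_range, Nat.lt_succ_iff] at hi
    rw [hqk i hi, hqj i hi]
    push_cast
    ring
  have hR : ∀ c : ℝ, (N.choose k : ℝ) * ((N.choose j : ℝ) * (2 ^ N * ((N.choose k : ℝ))⁻¹ * c))
      = (N.choose j : ℝ) * (2 ^ N * c) := by
    intro c; field_simp
  subst hℓ
  constructor
  · -- part 1
    apply mul_left_cancel₀ hcj
    apply mul_left_cancel₀ hck
    rw [conv1, m1, hR]
    by_cases h1 : j = k + 1
    · subst h1
      rw [if_pos rfl, E1]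
      rw [if_neg (by omega), if_neg (by omega), if_pos (by omega), if_neg (by omega)]
      obtain ⟨n, rfl⟩ : ∃ n, N = n + 1 := ⟨N - 1, by omega⟩
      simp only [Nat.add_sub_cancel, Nat.sub_zero]
      have H1 : ((n : ℝ) + 1) * (n.choose k) = ((n + 1).choose (k + 1) : ℝ) * ((k : ℝ) + 1) := by
        exact_mod_cast Nat.add_one_mul_choose_eq n k
      push_cast
      linear_combination (-(2 : ℝ) ^ n) * H1
    · rw [if_neg h1]
      by_cases h2 : j = k
      · subst h2
        rw [if_pos rfl, E1]
        rw [if_pos (by omega), if_neg (by omega), if_neg (by omega)]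
        rcases Nat.eq_zero_or_pos j with hk0 | hk1
        · subst hk0
          rw [if_neg (by omega)]
          cases N with
          | zero => norm_num
          | succ n =>
            simp only [Nat.add_sub_cancel, Nat.sub_zero, Nat.choose_zero_right]
            push_cast
            ring
        · rw [if_pos (by omega)]
          obtain ⟨n, rfl⟩ : ∃ n, N = n + 1 := ⟨N - 1, by omega⟩
          obtain ⟨t, rfl⟩ : ∃ t, j = t + 1 := ⟨j - 1, by omega⟩
          simp only [Nat.add_sub_cancel, Nat.sub_zero]
          have HP : ((n + 1).choose (t + 1) : ℝ) = (n.choose t : ℝ) + (n.choose (t + 1) : ℝ) := by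
            exact_mod_cast Nat.choose_succ_succ' n t
          push_cast
          linear_combination (-((n : ℝ) + 1)) * (2 : ℝ) ^ n * HP
      · rw [if_neg h2]
        by_cases h3 : j + 1 = k
        · subst h3
          rw [if_pos rfl, E1]
          rw [if_neg (by omega), if_pos (by omega), if_neg (by omega), if_neg (by omega)]
          obtain ⟨n, rfl⟩ : ∃ n, N = n + 1 := ⟨N - 1, by omega⟩
          simp only [Nat.add_sub_cancel, Nat.sub_zero]
          have H1 : ((n : ℝ) + 1) * (n.choose j) = ((n + 1).choose (j + 1) : ℝ) * ((j : ℝ) + 1) := by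
            exact_mod_cast Nat.add_one_mul_choose_eq n j
          have H2 : ((n + 1).choose (j + 1) : ℝ) * ((j : ℝ) + 1)
              = ((n + 1).choose j : ℝ) * (((n + 1 - j : ℕ)) : ℝ) := by
            exact_mod_cast Nat.choose_succ_right_eq (n + 1) j
          have hjn : j ≤ n + 1 := by omega
          rw [Nat.cast_sub hjn] at H2
          push_cast
          push_cast at H2
          linear_combination (-(2 : ℝ) ^ n) * (H1.trans H2)
        · rw [if_neg h3, E1]
          rw [if_neg (by omega), if_neg (by omega), if_neg (by omega), if_neg (by omega)]
          ring
  · -- part 2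
    apply mul_left_cancel₀ hcj
    apply mul_left_cancel₀ hck
    rw [conv2, m2, hR]
    by_cases h1 : j = k + 2
    · subst h1
      rw [if_pos rfl]
      obtain ⟨n, rfl⟩ : ∃ n, N = n + 2 := ⟨N - 2, by omega⟩
      rw [show n + 2 - 2 = n from by omega, show n + 2 - 1 = n + 1 from by omega]
      rw [E1_none _ _ _ (by omega) (by omega) (by omega), E3_up2]
      have HB := chooseR n k
      have HA := chooseR (n + 1) (k + 1)
      push_cast at HA HB ⊢
      linear_combination (2 : ℝ) ^ n * (((n : ℝ) + 2) * HB + ((k : ℝ) + 1) * HA)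
    · rw [if_neg h1]
      by_cases h2 : j = k + 1
      · subst h2
        rw [if_pos rfl]
        obtain ⟨n, rfl⟩ : ∃ n, N = n + 1 := ⟨N - 1, by omega⟩
        rw [Nat.add_sub_cancel]
        cases n with
        | zero =>
          have hk0 : k = 0 := by omega
          subst hk0
          rw [E1_up]
          norm_num
        | succ m =>
          rw [show m + 1 + 1 - 2 = m from by omega, E1_up]
          cases k with
          | zero =>
            rw [E3_up1_0]
            simp only [zero_add, Nat.choose_zero_right, Nat.choose_one_right]
            push_cast
            ring
          | succ t =>
            rw [E3_up1]
            have HP := pascalR m t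
            have H1 := chooseR (m + 1) (t + 1)
            push_cast at HP H1 ⊢
            linear_combination (2 : ℝ) ^ m * (2 * ((m : ℝ) + 2) * ((m : ℝ) + 1) * HP - 2 * ((m : ℝ) + 2) * H1)
      · rw [if_neg h2]
        by_cases h3 : j = k
        · subst h3
          rw [if_pos rfl]
          match j, hj with
          | 0, hj =>
            rw [E1_diag0]
            match N, hj with
            | 0, hj => norm_num [E3_diag0]
            | 1, hj => norm_num [E3_diag0]
            | (m + 2), hj =>
              rw [show m + 2 - 1 = m + 1 from by omega, show m + 2 - 2 = m from by omega,
                E3_diag0]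
              simp only [Nat.choose_zero_right]
              push_cast
              ring
          | 1, hj =>
            rw [E1_diag]
            match N, hj with
            | 1, hj => norm_num [E1_diag]
            | (m + 2), hj =>
              rw [show m + 2 - 1 = m + 1 from by omega, show m + 2 - 2 = m from by omega,
                E3_diag1]
              simp only [zero_add, Nat.choose_zero_right, Nat.choose_one_right]
              push_cast
              ring
          | (t + 2), hj =>
            obtain ⟨m, rfl⟩ : ∃ m, N = m + 2 := ⟨N - 2, by omega⟩
            rw [show m + 2 - 1 = m + 1 from by omega, show m + 2 - 2 = m from by omega,
              show t + 2 = (t + 1) + 1 from rfl, E1_diag,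
              show (t + 1) + 1 = t + 2 from rfl, E3_diag]
            have P1 := pascalR (m + 1) (t + 1)
            have P2 := pascalR m (t + 1)
            have P3 := pascalR m t
            have X := crossR m t (by omega)
            push_cast at P1 P2 P3 X ⊢
            linear_combination (2 : ℝ) ^ m *
              (-(((m : ℝ) + 2) * ((m : ℝ) + 3)) * P1 - ((m : ℝ) + 2) * ((m : ℝ) + 1) * (P2 + P3) + 2 * X)
        · rw [if_neg h3]
          by_cases h4 : j + 1 = k
          · subst h4
            rw [if_pos rfl]
            obtain ⟨n, rfl⟩ : ∃ n, N = n + 1 := ⟨N - 1, by omega⟩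
            rw [Nat.add_sub_cancel, E1_down]
            cases n with
            | zero =>
              have hj0 : j = 0 := by omega
              subst hj0
              norm_num
            | succ m =>
              rw [show m + 1 + 1 - 2 = m from by omega]
              have H1 := chooseR (m + 1) j
              have H2 := rightR (m + 2) j (by omega)
              cases j with
              | zero =>
                rw [show (0 : ℕ) + 1 = 1 from rfl, E3_down1_0]
                simp only [Nat.choose_zero_right]
                push_cast
                ring
              | succ t =>
                rw [show t + 1 + 1 = t + 2 from rfl, E3_down1]
                have HP := pascalR m t
                push_cast at H1 H2 HP ⊢
                linear_combination (2 : ℝ) ^ m * (-2 * ((m : ℝ) + 2) * H1 - 2 * ((m : ℝ) + 2) * H2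
                  + 2 * ((m : ℝ) + 2) * ((m : ℝ) + 1) * HP)
          · rw [if_neg h4]
            by_cases h5 : j + 2 = k
            · subst h5
              rw [if_pos rfl]
              obtain ⟨m, rfl⟩ : ∃ m, N = m + 2 := ⟨N - 2, by omega⟩
              rw [show m + 2 - 1 = m + 1 from by omega, show m + 2 - 2 = m from by omega,
                E1_none _ _ _ (by omega) (by omega) (by omega), E3_down2]
              have H1 := chooseR m j
              have H2 := rightR (m + 1) j (by omega)
              have H3 := chooseR (m + 1) j
              have H4 := rightR (m + 2) j (by omega)
              push_cast at H1 H2 H3 H4 ⊢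
              linear_combination (2 : ℝ) ^ m * (((m : ℝ) + 2) * (H1 + H2)
                + ((m : ℝ) + 1 - (j : ℝ)) * (H3 + H4))
            · rw [if_neg h5, E1_none _ _ _ (by omega) (by omega) (by omega),
                E3_none _ _ _ (by omega) (by omega) (by omega) (by omega) (by omega)]
              ring
end

section
/- Let n ≥ 3 be an integer and κ ≥ 0. For y ∈ (0,1) define the 2×2 matrices Ψ₀(y) := [[√y, 1], [√y, (y(n−1)−1)/(n−2)]], U := [[2n+1, 0], [−1, 2n+2]], and F(y) := [[(4y²n + 4yn − y² − 18y + 3)/(4y(y−1)), −2√y/(y−1)], [−2√y(n−2)/(y−1), 2y/(y−1)]], and set F^{(κ)}(y) := F(y) − κ Ψ₀(y)^{−1}(U + (κ−1)I)Ψ₀(y) − κ(1−2y)Ψ₀(y)^{−1}Ψ₀'(y). Then the diagonal matrix T^{(κ)} := diag(1, 2(n−2)/(κ+2)) satisfies T^{(κ)}(F^{(κ)}(y))^{*} = F^{(κ)}(y)T^{(κ)} for all y ∈ (0,1); moreover, T^{(κ)} is the unique diagonal 2×2 matrix T with T_{0,0} = 1 satisfying T(F^{(κ)}(y))^{*} =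 F^{(κ)}(y)T for all y ∈ (0,1). -/
open Matrix Set

/-- Entrywise derivative of a matrix-valued function on `ℝ`. -/
noncomputable def mderiv (Q : ℝ → Matrix (Fin 2) (Fin 2) ℂ) :
    ℝ → Matrix (Fin 2) (Fin 2) ℂ :=
  fun y => Matrix.of fun i j => deriv (fun t => Q t i j) y

set_option maxHeartbeats 1000000 in
/-- case c1, associated to `(Sp(2n), Sp(2n−2)×Sp(2))`: the diagonal
matrix `T^{(κ)} = diag(1, 2(n−2)/(κ+2))` is the unique diagonal matrix `T` with
`T_{0,0} = 1` satisfying `T(F^{(κ)}(y))^* = F^{(κ)}(y)T` on `(0,1)`. -/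
theorem stmt17 (n : ℕ) (hn : 3 ≤ n) (κ : ℝ) (hκ : 0 ≤ κ)
    (Ψ₀ : ℝ → Matrix (Fin 2) (Fin 2) ℂ)
    (hΨ₀ : ∀ y : ℝ, Ψ₀ y =
      !![(Real.sqrt y : ℂ), 1;
         (Real.sqrt y : ℂ), ((y : ℂ) * ((n : ℂ) - 1) - 1) / ((n : ℂ) - 2)])
    (U : Matrix (Fin 2) (Fin 2) ℂ)
    (hU : U = !![2 * (n : ℂ) + 1, 0; -1, 2 * (n : ℂ) + 2])
    (F : ℝ → Matrix (Fin 2) (Fin 2) ℂ)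
    (hF : ∀ y : ℝ, F y =
      !![(4 * (y : ℂ) ^ 2 * (n : ℂ) + 4 * (y : ℂ) * (n : ℂ) - (y : ℂ) ^ 2 - 18 * (y : ℂ) + 3)
            / (4 * (y : ℂ) * ((y : ℂ) - 1)),
         -(2 * (Real.sqrt y : ℂ)) / ((y : ℂ) - 1);
         -(2 * (Real.sqrt y : ℂ) * ((n : ℂ) - 2)) / ((y : ℂ) - 1),
         2 * (y : ℂ) / ((y : ℂ) - 1)])
    (Fκ : ℝ → Matrix (Fin 2) (Fin 2) ℂ)
    (hFκ : ∀ y : ℝ, Fκ y = F y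
      - (κ : ℂ) • ((Ψ₀ y)⁻¹ * (U + ((κ : ℂ) - 1) • (1 : Matrix (Fin 2) (Fin 2) ℂ)) * Ψ₀ y)
      - ((κ : ℂ) * (1 - 2 * (y : ℂ))) • ((Ψ₀ y)⁻¹ * mderiv Ψ₀ y)) :
    (∀ y ∈ Set.Ioo (0:ℝ) 1,
      !![1, 0; 0, 2 * ((n : ℂ) - 2) / ((κ : ℂ) + 2)] * (Fκ y)ᴴ
        = Fκ y * !![1, 0; 0, 2 * ((n : ℂ) - 2) / ((κ : ℂ) + 2)])
    ∧ ∀ T : Matrix (Fin 2) (Fin 2) ℂ, T.IsDiag → T 0 0 = 1 →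
        (∀ y ∈ Set.Ioo (0:ℝ) 1, T * (Fκ y)ᴴ = Fκ y * T) →
        T = !![1, 0; 0, 2 * ((n : ℂ) - 2) / ((κ : ℂ) + 2)] := by
  have hn1 : ((n : ℂ) - 1) ≠ 0 := by
    intro h
    have h1 : ((n:ℝ) : ℂ) = 1 := by push_cast; linear_combination h
    have h2 : (n:ℝ) = 1 := by exact_mod_cast h1
    have h3 : (3:ℝ) ≤ (n:ℝ) := by exact_mod_cast hn
    linarith
  have hn2 : ((n : ℂ) - 2) ≠ 0 := by
    intro h
    have h1 : ((n:ℝ) : ℂ) = 2 := by push_cast; linear_combination h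
    have h2 : (n:ℝ) = 2 := by exact_mod_cast h1
    have h3 : (3:ℝ) ≤ (n:ℝ) := by exact_mod_cast hn
    linarith
  have hκ2 : ((κ : ℂ) + 2) ≠ 0 := by
    intro h
    have h1 : ((κ:ℝ) : ℂ) = -2 := by linear_combination h
    have h2 : (κ:ℝ) = -2 := by exact_mod_cast h1
    linarith
  -- the explicit form of `Fκ` on `(0,1)`
  have key : ∀ y ∈ Set.Ioo (0:ℝ) 1, Fκ y =
      !![(4 * (y : ℂ) ^ 2 * (n : ℂ) + 4 * (y : ℂ) * (n : ℂ) - (y : ℂ) ^ 2 - 18 * (y : ℂ) + 3)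
            / (4 * (y : ℂ) * ((y : ℂ) - 1))
          - (κ : ℂ) * (2 * (n : ℂ) + (κ : ℂ)) - (κ : ℂ) * (1 - 2 * (y : ℂ)) / (2 * (y : ℂ)),
         -((Real.sqrt y : ℂ) * ((κ : ℂ) + 2)) / ((y : ℂ) - 1);
         -(2 * (Real.sqrt y : ℂ) * ((n : ℂ) - 2)) / ((y : ℂ) - 1),
         2 * (y : ℂ) / ((y : ℂ) - 1) - (κ : ℂ) * (2 * (n : ℂ) + (κ : ℂ) + 1)
          - (κ : ℂ) * (1 - 2 * (y : ℂ)) / ((y : ℂ) - 1)] := by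
    rintro y ⟨hy0, hy1⟩
    set s : ℂ := ((Real.sqrt y : ℝ) : ℂ) with hsdef
    have hne : y ≠ 0 := ne_of_gt hy0
    have hs0 : Real.sqrt y ≠ 0 := ne_of_gt (Real.sqrt_pos.2 hy0)
    have hsc : s ≠ 0 := by
      simp only [hsdef, ne_eq, Complex.ofReal_eq_zero]; exact hs0
    have hsq : s ^ 2 = (y : ℂ) := by
      rw [hsdef]
      norm_cast
      rw [Real.sq_sqrt (le_of_lt hy0)]
    have hyc : (y : ℂ) ≠ 0 := by
      simp only [ne_eq, Complex.ofReal_eq_zero]; exact hne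
    have hy1c : ((y : ℂ) - 1) ≠ 0 := by
      intro h
      have h1 : ((y:ℝ) : ℂ) = 1 := by linear_combination h
      have h2 : (y:ℝ) = 1 := by exact_mod_cast h1
      linarith
    have hs1 : s ^ 2 - 1 ≠ 0 := by rw [hsq]; exact hy1c
    -- derivative matrix
    have hsder : HasDerivAt (fun t : ℝ => ((Real.sqrt t : ℝ) : ℂ))
        ((1 / (2 * Real.sqrt y) : ℝ) : ℂ) y :=
      (Real.hasDerivAt_sqrt hne).ofReal_comp
    have hid : HasDerivAt (fun t : ℝ => ((t : ℝ) : ℂ)) 1 y := by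
      simpa using (hasDerivAt_id y).ofReal_comp
    have h11 : HasDerivAt (fun t : ℝ => (((t : ℝ) : ℂ) * ((n : ℂ) - 1) - 1) / ((n : ℂ) - 2))
        (((n : ℂ) - 1) / ((n : ℂ) - 2)) y := by
      simpa using ((hid.mul_const ((n : ℂ) - 1)).sub_const 1).div_const ((n : ℂ) - 2)
    have hder : mderiv Ψ₀ y = !![1 / (2 * s), 0;
                                 1 / (2 * s), ((n : ℂ) - 1) / ((n : ℂ) - 2)] := by
      ext i j
      fin_cases i <;> fin_cases j <;>
        simp only [mderiv, Matrix.of_apply, Matrix.cons_val', Matrix.cons_val_zero,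
          Matrix.cons_val_one, Matrix.head_cons, Matrix.empty_val', Matrix.cons_val_fin_one,
          Matrix.head_fin_const]
      · show deriv (fun t => Ψ₀ t 0 0) y = 1 / (2 * s)
        rw [show (fun t => Ψ₀ t 0 0) = fun t : ℝ => ((Real.sqrt t : ℝ) : ℂ) from
          funext fun t => by rw [hΨ₀ t]; simp]
        rw [hsder.deriv, hsdef]; push_cast; ring
      · show deriv (fun t => Ψ₀ t 0 1) y = 0
        rw [show (fun t => Ψ₀ t 0 1) = fun _ : ℝ => (1 : ℂ) from
          funext fun t => by rw [hΨ₀ t]; simp]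
        simp
      · show deriv (fun t => Ψ₀ t 1 0) y = 1 / (2 * s)
        rw [show (fun t => Ψ₀ t 1 0) = fun t : ℝ => ((Real.sqrt t : ℝ) : ℂ) from
          funext fun t => by rw [hΨ₀ t]; simp]
        rw [hsder.deriv, hsdef]; push_cast; ring
      · show deriv (fun t => Ψ₀ t 1 1) y = ((n : ℂ) - 1) / ((n : ℂ) - 2)
        rw [show (fun t => Ψ₀ t 1 1) =
            fun t : ℝ => (((t : ℝ) : ℂ) * ((n : ℂ) - 1) - 1) / ((n : ℂ) - 2) from
          funext fun t => by rw [hΨ₀ t]; simp]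
        simp [h11.deriv]
    -- inverse of Ψ₀
    set P : Matrix (Fin 2) (Fin 2) ℂ :=
      !![((y : ℂ) * ((n : ℂ) - 1) - 1) / (((n : ℂ) - 1) * ((y : ℂ) - 1) * s),
         -((n : ℂ) - 2) / (((n : ℂ) - 1) * ((y : ℂ) - 1) * s);
         -((n : ℂ) - 2) / (((n : ℂ) - 1) * ((y : ℂ) - 1)),
         ((n : ℂ) - 2) / (((n : ℂ) - 1) * ((y : ℂ) - 1))] with hPdef
    have hPΨ : P * !![s, 1; s, ((y : ℂ) * ((n : ℂ) - 1) - 1) / ((n : ℂ) - 2)] = 1 := by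
      rw [hPdef]
      ext i j
      fin_cases i <;> fin_cases j <;>
        simp [Matrix.mul_apply, Fin.sum_univ_two, Matrix.one_apply] <;>
        field_simp <;> ring
    have hinv : (Ψ₀ y)⁻¹ = P := by
      apply Matrix.inv_eq_left_inv
      rw [hΨ₀ y]
      exact hPΨ
    rw [hFκ y, hF y, hU, hinv, hder, hΨ₀ y]
    have hone : ((κ : ℂ) - 1) • (1 : Matrix (Fin 2) (Fin 2) ℂ)
        = !![(κ : ℂ) - 1, 0; 0, (κ : ℂ) - 1] := by
      ext i j; fin_cases i <;> fin_cases j <;> simp [Matrix.one_apply]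
    rw [hone]
    set Ψm : Matrix (Fin 2) (Fin 2) ℂ :=
      !![s, 1; s, ((y : ℂ) * ((n : ℂ) - 1) - 1) / ((n : ℂ) - 2)] with hΨm
    have hVK : (!![2 * (n : ℂ) + 1, 0; -1, 2 * (n : ℂ) + 2]
          + !![(κ : ℂ) - 1, 0; 0, (κ : ℂ) - 1]) * Ψm
        = Ψm * !![2 * (n : ℂ) + (κ : ℂ), -(1 / s); 0, 2 * (n : ℂ) + (κ : ℂ) + 1] := by
      rw [hΨm]
      ext i j
      fin_cases i <;> fin_cases j <;>
        simp only [Matrix.mul_apply, Matrix.add_apply, Fin.sum_univ_two, Fin.isValue,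
          Matrix.cons_val', Matrix.cons_val_zero, Matrix.cons_val_one, Matrix.head_cons,
          Matrix.head_fin_const, Matrix.empty_val', Matrix.cons_val_fin_one,
          Matrix.of_apply, Fin.zero_eta, Fin.mk_one] <;>
        (try rw [← hsq]) <;> field_simp <;> ring
    have hK : P * (!![2 * (n : ℂ) + 1, 0; -1, 2 * (n : ℂ) + 2]
          + !![(κ : ℂ) - 1, 0; 0, (κ : ℂ) - 1]) * Ψm
        = !![2 * (n : ℂ) + (κ : ℂ), -(1 / s); 0, 2 * (n : ℂ) + (κ : ℂ) + 1] := by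
      rw [Matrix.mul_assoc, hVK, ← Matrix.mul_assoc, hPΨ, Matrix.one_mul]
    have hDL : !![1 / (2 * s), 0; 1 / (2 * s), ((n : ℂ) - 1) / ((n : ℂ) - 2)]
        = Ψm * !![1 / (2 * (y : ℂ)), -(1 / (s * ((y : ℂ) - 1))); 0, 1 / ((y : ℂ) - 1)] := by
      rw [hΨm]
      ext i j
      fin_cases i <;> fin_cases j <;>
        simp only [Matrix.mul_apply, Matrix.add_apply, Fin.sum_univ_two, Fin.isValue,
          Matrix.cons_val', Matrix.cons_val_zero, Matrix.cons_val_one, Matrix.head_cons,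
          Matrix.head_fin_const, Matrix.empty_val', Matrix.cons_val_fin_one,
          Matrix.of_apply, Fin.zero_eta, Fin.mk_one] <;>
        rw [← hsq] <;> field_simp <;> ring
    have hL : P * !![1 / (2 * s), 0; 1 / (2 * s), ((n : ℂ) - 1) / ((n : ℂ) - 2)]
        = !![1 / (2 * (y : ℂ)), -(1 / (s * ((y : ℂ) - 1))); 0, 1 / ((y : ℂ) - 1)] := by
      rw [hDL, ← Matrix.mul_assoc, hPΨ, Matrix.one_mul]
    rw [hK, hL]
    ext i j
    fin_cases i <;> fin_cases j <;>
      simp only [Matrix.sub_apply, Matrix.smul_apply, smul_eq_mul, Fin.isValue,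
        Matrix.cons_val', Matrix.cons_val_zero, Matrix.cons_val_one, Matrix.head_cons,
        Matrix.head_fin_const, Matrix.empty_val', Matrix.cons_val_fin_one,
        Matrix.of_apply, Fin.zero_eta, Fin.mk_one] <;>
      rw [← hsq] <;> field_simp <;> ring
  constructor
  · intro y hy
    obtain ⟨hy0, hy1⟩ := hy
    have hy1c : ((y : ℂ) - 1) ≠ 0 := by
      intro h
      have h1 : ((y:ℝ) : ℂ) = 1 := by linear_combination h
      have h2 : (y:ℝ) = 1 := by exact_mod_cast h1
      linarith
    have hyc : (y : ℂ) ≠ 0 := by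
      simp only [ne_eq, Complex.ofReal_eq_zero]; exact ne_of_gt hy0
    rw [key y ⟨hy0, hy1⟩]
    ext i j
    fin_cases i <;> fin_cases j <;>
      simp only [Matrix.mul_apply, Matrix.conjTranspose_apply, Fin.sum_univ_two, Fin.isValue,
        Matrix.cons_val', Matrix.cons_val_zero, Matrix.cons_val_one, Matrix.head_cons,
        Matrix.head_fin_const, Matrix.empty_val', Matrix.cons_val_fin_one, Matrix.of_apply, Fin.zero_eta, Fin.mk_one,
        map_div₀, _root_.map_mul, map_sub, _root_.map_add, map_neg, _root_.map_one, map_ofNat, map_pow,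
        Complex.conj_ofReal, map_natCast, star_zero, star_one, Complex.star_def, map_zero] <;>
      field_simp <;> ring
  · intro T hdiag hT00 hcond
    have hmem : (1/2 : ℝ) ∈ Set.Ioo (0:ℝ) 1 := by norm_num
    have h := hcond (1/2) hmem
    rw [key (1/2) hmem] at h
    have h10 := congrFun (congrFun h 1) 0
    have hT10 : T 1 0 = 0 := hdiag (by decide)
    have hT01 : T 0 1 = 0 := hdiag (by decide)
    have hs0 : ((Real.sqrt (1/2) : ℝ) : ℂ) ≠ 0 := by
      simp only [ne_eq, Complex.ofReal_eq_zero]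
      exact ne_of_gt (Real.sqrt_pos.2 (by norm_num))
    have hy1c : (((1/2 : ℝ) : ℂ) - 1) ≠ 0 := by
      intro hcontra
      have h1 : (((1/2:ℝ)) : ℂ) = 1 := by linear_combination hcontra
      norm_num at h1
    simp only [Matrix.mul_apply, Matrix.conjTranspose_apply, Fin.sum_univ_two, Fin.isValue,
      Matrix.cons_val', Matrix.cons_val_zero, Matrix.cons_val_one, Matrix.head_cons,
      Matrix.head_fin_const, Matrix.empty_val', Matrix.cons_val_fin_one, Matrix.of_apply, Fin.zero_eta, Fin.mk_one,
      map_div₀, _root_.map_mul, map_sub, _root_.map_add, map_neg, _root_.map_one, map_ofNat, map_pow,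
      Complex.conj_ofReal, map_natCast, star_zero, star_one, Complex.star_def, map_zero, hT10, hT00] at h10
    have hT11 : T 1 1 = 2 * ((n : ℂ) - 2) / ((κ : ℂ) + 2) := by
      have hcoef : -(((Real.sqrt (1/2) : ℝ) : ℂ) * ((κ : ℂ) + 2)) / (((1/2 : ℝ) : ℂ) - 1) ≠ 0 := by
        apply div_ne_zero _ hy1c
        simp only [neg_ne_zero]
        exact mul_ne_zero hs0 hκ2
      field_simp at h10
      ring_nf at h10
      rw [eq_div_iff hκ2]
      have hc : ((1/2:ℝ):ℂ) * ((Real.sqrt (1/2) : ℝ) : ℂ) * 8 ≠ 0 :=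
        mul_ne_zero (mul_ne_zero (by norm_num) hs0) (by norm_num)
      apply mul_left_cancel₀ hc
      linear_combination (-1 : ℂ) * h10
    ext i j
    fin_cases i <;> fin_cases j
    · simpa using hT00
    · simpa using hT01
    · simpa using hT10
    · simpa using hT11
end
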